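/- arXiv:1812.05142 — 8 statements merged into one kernel-verified Lean document; each statement's English description precedes it below -/
import Mathlib

section
/- Let V_ABC = [[A, X, Y], [Xᵀ, B, Z], [Yᵀ, Zᵀ, C]] be a real symmetric positive definite tripartite covariance matrix. Then conditioning on more systems decreases the Schur complement: V_ABC / V_BC ≤ V_AC / V_C in the Loewner order; explicitly, A − [X Y]·V_BC^{-1}·[X Y]ᵀ ≤ A − Y·C^{-1}·Yᵀ, where [X Y] denotes the block row formed by X and Y. -/
open Matrix

private lemma posDef_toBlock₂₂ {m n : Type*} [Fintype m] [Fintype n]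
    {A : Matrix m m ℝ} {B : Matrix m n ℝ} {C : Matrix n m ℝ} {D : Matrix n n ℝ}
    (h : (fromBlocks A B C D).PosDef) : D.PosDef := by
  refine posDef_iff_dotProduct_mulVec.mpr ⟨?_, ?_⟩
  · have h1 := (h.posSemidef.submatrix (Sum.inr : n → m ⊕ n)).1
    exact h1
  · intro x hx
    have hne : (Sum.elim (0 : m → ℝ) x) ≠ 0 := by
      intro h0
      exact hx (funext fun i => congrFun h0 (Sum.inr i))
    have h2 := h.dotProduct_mulVec_pos hne
    simpa [fromBlocks_mulVec, dotProduct, Fintype.sum_sum_type, mulVec] using h2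

/-- **Conditioning on more systems decreases the Schur complement.**
For a real symmetric positive definite tripartite covariance matrix
`V_ABC = [[A, X, Y], [Xᵀ, B, Z], [Yᵀ, Zᵀ, C]]` we have
`V_ABC / V_BC ≤ V_AC / V_C` in the Loewner order, i.e.
`A − [X Y]·V_BC⁻¹·[X Y]ᵀ ≤ A − Y·C⁻¹·Yᵀ`. -/
theorem schur_complement_mono_partial_trace (a b c : ℕ)
    (A : Matrix (Fin a) (Fin a) ℝ) (B : Matrix (Fin b) (Fin b) ℝ)
    (C : Matrix (Fin c) (Fin c) ℝ)
    (X : Matrix (Fin a) (Fin b) ℝ) (Y : Matrix (Fin a) (Fin c) ℝ)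
    (Z : Matrix (Fin b) (Fin c) ℝ)
    (hV : (fromBlocks A (fromCols X Y) (fromRows Xᵀ Yᵀ)
            (fromBlocks B Z Zᵀ C)).PosDef) :
    ((A - Y * C⁻¹ * Yᵀ) -
      (A - fromCols X Y * (fromBlocks B Z Zᵀ C)⁻¹ * (fromCols X Y)ᵀ)).PosSemidef := by
  set W : Matrix (Fin a) (Fin b ⊕ Fin c) ℝ := fromCols X Y with hW
  set V : Matrix (Fin b ⊕ Fin c) (Fin b ⊕ Fin c) ℝ := fromBlocks B Z Zᵀ C with hVdef
  have hVpd : V.PosDef := posDef_toBlock₂₂ hV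
  have hCpd : C.PosDef := posDef_toBlock₂₂ hVpd
  haveI : Invertible V := hVpd.isUnit.invertible
  haveI : Invertible C := hCpd.isUnit.invertible
  have hVsymm : Vᵀ = V := hVpd.1
  have hVinvT : (V⁻¹)ᵀ = V⁻¹ := by rw [transpose_nonsing_inv, hVsymm]
  have hgoal : (A - Y * C⁻¹ * Yᵀ) - (A - W * V⁻¹ * Wᵀ)
      = W * V⁻¹ * Wᵀ - Y * C⁻¹ * Yᵀ := by abel
  rw [hgoal]
  have hYH : Yᴴ = Yᵀ := rfl
  rw [← hYH]
  rw [← PosDef.fromBlocks₂₂ (W * V⁻¹ * Wᵀ) Y hCpd]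
  -- Show the block matrix is a congruence N * V * Nᴴ of V
  set N : Matrix (Fin a ⊕ Fin c) (Fin b ⊕ Fin c) ℝ :=
    fromRows (W * V⁻¹) (fromCols (0 : Matrix (Fin c) (Fin b) ℝ) 1) with hN
  have hNH : Nᴴ = fromCols (V⁻¹ * Wᵀ) (fromRows (0 : Matrix (Fin b) (Fin c) ℝ) 1) := by
    rw [show Nᴴ = Nᵀ from rfl, hN, transpose_fromRows, transpose_mul, hVinvT]
    simp [transpose_fromCols]
  have hkey : N * V * Nᴴ = fromBlocks (W * V⁻¹ * Wᵀ) Y Yᴴ C := by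
    rw [hN, hNH, fromRows_mul, fromRows_mul_fromCols]
    rw [Matrix.mul_assoc (W * V⁻¹) V, Matrix.mul_inv_cancel_left_of_invertible,
      Matrix.inv_mul_cancel_right_of_invertible,
      Matrix.mul_assoc (fromCols 0 1) V, Matrix.mul_inv_cancel_left_of_invertible,
      Matrix.mul_assoc (fromCols 0 1) V]
    rw [show Wᵀ = fromRows Xᵀ Yᵀ from by rw [hW, transpose_fromCols]]
    rw [hW, hVdef, fromCols_mul_fromRows, fromCols_mul_fromRows,
      fromBlocks_mul_fromRows, fromCols_mul_fromRows]
    simp only [Matrix.mul_zero, Matrix.zero_mul, Matrix.mul_one, Matrix.one_mul,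
      add_zero, zero_add]
    rfl
  rw [← hkey]
  exact hVpd.posSemidef.mul_mul_conjTranspose_same N
end

section
/- Let V_AB = [[V_A, X], [Xᵀ, V_B]] be real symmetric positive definite (diagonal blocks of sizes a and b), and let γ = [[γ_B, δ], [δᵀ, γ_B']] be real symmetric positive definite (diagonal blocks of sizes b and b'). Define the classical Gaussian map Γ on the B system by Γ(V_B) := γ_B' − δᵀ (γ_B + V_B)^{-1} δ, and define Γ(V_AB) as the Schur complement eliminating the middle block of the symmetric matrix W := [[V_A, X, 0], [Xᵀ, V_B + γ_B, δ], [0, δᵀ, γ_B']], i.e. Γ(V_AB) = [[V_A − X(V_B+γ_B)^{-1}Xᵀ, −X(V_B+γ_B)^{-1}δ], [−δᵀ(V_B+γ_B)^{-1}Xᵀ, Γ(V_B)]], a symmetric positive definite matrix on A⊕B' whose B'-reduction is Γ(V_B). Then Γ(V_AB) / Γ(V_B) ≥ V_AB / V_B in the Loewner order. -/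
open Matrix

section helpers

variable {m n : Type*} [Fintype m] [Fintype n] [DecidableEq m] [DecidableEq n]

private lemma posDef_of_fromBlocks₁₁' {A : Matrix m m ℝ} {B : Matrix m n ℝ} {C : Matrix n m ℝ}
    {D : Matrix n n ℝ} (h : (fromBlocks A B C D).PosDef) : A.PosDef := by
  refine PosDef.of_dotProduct_mulVec_pos (isHermitian_fromBlocks_iff.mp h.1).1 fun x hx => ?_
  have h2 := h.dotProduct_mulVec_pos (x := Sum.elim x 0)
    (fun hc => hx (funext fun i => congrFun hc (Sum.inl i)))
  simpa [Function.star_sumElim, fromBlocks_mulVec, sumElim_dotProduct_sumElim] using h2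

private lemma posDef_of_fromBlocks₂₂' {A : Matrix m m ℝ} {B : Matrix m n ℝ} {C : Matrix n m ℝ}
    {D : Matrix n n ℝ} (h : (fromBlocks A B C D).PosDef) : D.PosDef := by
  refine PosDef.of_dotProduct_mulVec_pos (isHermitian_fromBlocks_iff.mp h.1).2.2.2 fun x hx => ?_
  have h2 := h.dotProduct_mulVec_pos (x := Sum.elim 0 x)
    (fun hc => hx (funext fun i => congrFun hc (Sum.inr i)))
  simpa [Function.star_sumElim, fromBlocks_mulVec, sumElim_dotProduct_sumElim] using h2

end helpers

/-- **Classical Gaussian maps on the conditioning system increase the Schur complement.**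
Given a positive definite bipartite `V_AB = [[V_A, X], [Xᵀ, V_B]]` and a positive definite
`γ = [[γ_B, δ], [δᵀ, γ_B']]`, the classical Gaussian map `Γ(V_B) = γ_B' − δᵀ(γ_B+V_B)⁻¹δ`
acting on the `B` system satisfies `Γ(V_AB) / Γ(V_B) ≥ V_AB / V_B` in the Loewner order,
where `Γ(V_AB)` is the block matrix
`[[V_A − X(V_B+γ_B)⁻¹Xᵀ, −X(V_B+γ_B)⁻¹δ], [−δᵀ(V_B+γ_B)⁻¹Xᵀ, Γ(V_B)]]`. -/
theorem gaussian_map_increases_schur_complement (a b b' : ℕ)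
    (VA : Matrix (Fin a) (Fin a) ℝ) (VB : Matrix (Fin b) (Fin b) ℝ)
    (X : Matrix (Fin a) (Fin b) ℝ)
    (γB : Matrix (Fin b) (Fin b) ℝ) (γB' : Matrix (Fin b') (Fin b') ℝ)
    (δ : Matrix (Fin b) (Fin b') ℝ)
    (hV : (fromBlocks VA X Xᵀ VB).PosDef)
    (hγ : (fromBlocks γB δ δᵀ γB').PosDef) :
    (((VA - X * (VB + γB)⁻¹ * Xᵀ) -
        (-(X * (VB + γB)⁻¹ * δ)) * (γB' - δᵀ * (γB + VB)⁻¹ * δ)⁻¹ *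
          (-(δᵀ * (VB + γB)⁻¹ * Xᵀ)))
      - (VA - X * VB⁻¹ * Xᵀ)).PosSemidef := by
  have hVB : VB.PosDef := posDef_of_fromBlocks₂₂' hV
  have hγB : γB.PosDef := posDef_of_fromBlocks₁₁' hγ
  have hγB' : γB'.PosDef := posDef_of_fromBlocks₂₂' hγ
  have hδc : δᴴ = δᵀ := by ext i j; simp [conjTranspose_apply]
  have hXc : Xᴴ = Xᵀ := by ext i j; simp [conjTranspose_apply]
  rw [show γB + VB = VB + γB from add_comm γB VB]
  set S := VB + γB with hSdef
  have hS : S.PosDef := hVB.add_posSemidef hγB.posSemidef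
  haveI iγB' : Invertible γB' := hγB'.isUnit.invertible
  haveI iS : Invertible S := hS.isUnit.invertible
  haveI iVB : Invertible VB := hVB.isUnit.invertible
  -- K = Schur complement of γ w.r.t. γB', positive semidefinite
  set K := γB - δ * γB'⁻¹ * δᵀ with hKdef
  have hK : K.PosSemidef := by
    have h := (PosDef.fromBlocks₂₂ γB δ hγB')
    rw [hδc] at h
    exact h.mp hγ.posSemidef
  have hVBK : (VB + K).PosDef := hVB.add_posSemidef hK
  haveI iVBK : Invertible (VB + K) := hVBK.isUnit.invertible
  have hSK : S - δ * γB'⁻¹ * δᵀ = VB + K := by rw [hSdef, hKdef]; abel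
  -- monotonicity of the inverse: VB⁻¹ - (VB+K)⁻¹ is PSD
  have hVBinv : (VB⁻¹).PosDef := hVB.inv
  haveI iVBinv : Invertible (VB⁻¹) := hVBinv.isUnit.invertible
  have h1 := PosDef.fromBlocks₁₁ (A := VB + K) (1 : Matrix (Fin b) (Fin b) ℝ) VB⁻¹ hVBK
  have h2 := PosDef.fromBlocks₂₂ (VB + K) (1 : Matrix (Fin b) (Fin b) ℝ) hVBinv
  rw [conjTranspose_one] at h1 h2
  simp only [Matrix.one_mul, Matrix.mul_one] at h1 h2
  rw [nonsing_inv_nonsing_inv VB hVB.det_pos.ne'.isUnit] at h2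
  have hmono : (VB⁻¹ - (VB + K)⁻¹).PosSemidef := by
    refine h1.mp (h2.mpr ?_)
    simpa [add_sub_cancel_left] using hK
  -- Woodbury identity via block inverses
  haveI iSK : Invertible (S - δ * ⅟γB' * δᵀ) := by
    have : S - δ * ⅟γB' * δᵀ = VB + K := by rw [invOf_eq_nonsing_inv]; exact hSK
    rw [this]; exact iVBK
  haveI iW : Invertible (fromBlocks S δ δᵀ γB') := fromBlocks₂₂Invertible S δ δᵀ γB'
  haveI iΓ : Invertible (γB' - δᵀ * ⅟S * δ) := invertibleOfFromBlocks₁₁Invertible S δ δᵀ γB'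
  have hΓeq : γB' - δᵀ * ⅟S * δ = γB' - δᵀ * S⁻¹ * δ := by rw [invOf_eq_nonsing_inv]
  have hwood : (VB + K)⁻¹ =
      S⁻¹ + S⁻¹ * δ * (γB' - δᵀ * S⁻¹ * δ)⁻¹ * δᵀ * S⁻¹ := by
    have e1 := invOf_fromBlocks₂₂_eq S δ δᵀ γB'
    have e2 := invOf_fromBlocks₁₁_eq S δ δᵀ γB'
    have h11 := congrArg Matrix.toBlocks₁₁ (e1.symm.trans e2)
    simp only [toBlocks_fromBlocks₁₁] at h11
    calc (VB + K)⁻¹ = (S - δ * ⅟γB' * δᵀ)⁻¹ := by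
          rw [invOf_eq_nonsing_inv, hSK]
      _ = ⅟(S - δ * ⅟γB' * δᵀ) := (invOf_eq_nonsing_inv _).symm
      _ = ⅟S + ⅟S * δ * ⅟(γB' - δᵀ * ⅟S * δ) * δᵀ * ⅟S := h11
      _ = S⁻¹ + S⁻¹ * δ * (γB' - δᵀ * S⁻¹ * δ)⁻¹ * δᵀ * S⁻¹ := by
          rw [invOf_eq_nonsing_inv (γB' - δᵀ * ⅟S * δ), hΓeq, invOf_eq_nonsing_inv S]
  -- assemble
  have hfinal := hmono.mul_mul_conjTranspose_same X
  rw [hXc] at hfinal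
  have heq : (((VA - X * S⁻¹ * Xᵀ) -
        (-(X * S⁻¹ * δ)) * (γB' - δᵀ * S⁻¹ * δ)⁻¹ * (-(δᵀ * S⁻¹ * Xᵀ)))
      - (VA - X * VB⁻¹ * Xᵀ)) = X * (VB⁻¹ - (VB + K)⁻¹) * Xᵀ := by
    rw [hwood]
    simp only [Matrix.mul_sub, Matrix.sub_mul, Matrix.mul_add, Matrix.add_mul,
      Matrix.neg_mul, Matrix.mul_neg, neg_neg, Matrix.mul_assoc]
    abel
  rw [heq]
  exact hfinal
end

section
/- Let V_ABC be a tripartite quantum covariance matrix, i.e. a real symmetric matrix with diagonal blocks of sizes 2n_A, 2n_B, 2n_C such that the complex Hermitian matrix V_ABC + iΩ_ABC is positive semidefinite, where Ω_ABC = Ω_A ⊕ Ω_B ⊕ Ω_C is the standard symplectic form (such a V_ABC and all its reductions are automatically positive definite, so the Schur complements below exist). Then the monogamy inequality V_AC / V_A ≥ Ω_Cᵀ (V_BC / V_B)^{-1} Ω_C holds in the Loewner order. -/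
open Matrix ComplexOrder

/-- The standard symplectic form on `k` modes: the `2k × 2k` block-diagonal matrix
`⊕_{i=1}^k [[0, 1], [−1, 0]]`. -/
noncomputable def Omega (k : ℕ) : Matrix (Fin 2 × Fin k) (Fin 2 × Fin k) ℝ :=
  Matrix.blockDiagonal fun _ : Fin k => !![(0 : ℝ), 1; -1, 0]

/-- `V` is a quantum covariance matrix with respect to the symplectic form `Ω`:
the complex Hermitian matrix `V + iΩ` is positive semidefinite. -/
def IsQCM {ι : Type} [Fintype ι] [DecidableEq ι] (Ω V : Matrix ι ι ℝ) : Prop :=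
  (V.map (fun x => (x : ℂ)) + Complex.I • Ω.map (fun x => (x : ℂ))).PosSemidef

set_option linter.unusedSectionVars false

section Aux
variable {ι : Type} [Fintype ι] [DecidableEq ι]

lemma mulVec_ofReal (M : Matrix ι ι ℝ) (s : ι → ℝ) :
    (M.map (fun x => (x : ℂ))) *ᵥ (fun i => (s i : ℂ)) = fun i => ((M *ᵥ s) i : ℂ) := by
  funext i
  exact (RingHom.map_mulVec Complex.ofRealHom M s i).symm

lemma dot_ofReal (M : Matrix ι ι ℝ) (r s : ι → ℝ) :
    (fun i => (r i : ℂ)) ⬝ᵥ ((M.map (fun x => (x : ℂ))) *ᵥ (fun i => (s i : ℂ)))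
      = ((r ⬝ᵥ M *ᵥ s : ℝ) : ℂ) := by
  rw [mulVec_ofReal]
  exact (RingHom.map_dotProduct Complex.ofRealHom r (M *ᵥ s)).symm

lemma symm_dot {V : Matrix ι ι ℝ} (hV : Vᵀ = V) (x y : ι → ℝ) :
    x ⬝ᵥ V *ᵥ y = y ⬝ᵥ V *ᵥ x := by
  conv_lhs => rw [dotProduct_mulVec, ← hV, vecMul_transpose, dotProduct_comm]

lemma vecMul_skew {Ω : Matrix ι ι ℝ} (hΩ : Ωᵀ = -Ω) (x : ι → ℝ) :
    x ᵥ* Ω = -(Ω *ᵥ x) := by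
  calc x ᵥ* Ω = x ᵥ* (Ωᵀ)ᵀ := by rw [transpose_transpose]
    _ = Ωᵀ *ᵥ x := vecMul_transpose _ _
    _ = -(Ω *ᵥ x) := by rw [hΩ, neg_mulVec]

lemma skew_dot {Ω : Matrix ι ι ℝ} (hΩ : Ωᵀ = -Ω) (x y : ι → ℝ) :
    x ⬝ᵥ Ω *ᵥ y = -(y ⬝ᵥ Ω *ᵥ x) := by
  rw [dotProduct_mulVec, vecMul_skew hΩ, neg_dotProduct, dotProduct_comm]

lemma skew_dot_self {Ω : Matrix ι ι ℝ} (hΩ : Ωᵀ = -Ω) (x : ι → ℝ) :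
    x ⬝ᵥ Ω *ᵥ x = 0 := by
  have := skew_dot hΩ x x; linarith

/-- The fundamental scalar inequality extracted from the QCM condition, by testing
`V + iΩ ≥ 0` on the complex vector `r + i s`. -/
lemma qcm_key {Ω V : Matrix ι ι ℝ} (hV : Vᵀ = V) (hΩ : Ωᵀ = -Ω)
    (h : IsQCM Ω V) (r s : ι → ℝ) :
    2 * (r ⬝ᵥ Ω *ᵥ s) ≤ r ⬝ᵥ V *ᵥ r + s ⬝ᵥ V *ᵥ s := by
  have h0 := h.dotProduct_mulVec_nonneg ((fun i => (r i : ℂ)) + Complex.I • (fun i => (s i : ℂ)))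
  have hstar : star ((fun i => (r i : ℂ)) + Complex.I • (fun i => (s i : ℂ)))
      = (fun i => (r i : ℂ)) - Complex.I • (fun i => (s i : ℂ)) := by
    funext i
    simp [Complex.ext_iff]
  rw [hstar] at h0
  simp only [add_mulVec, smul_mulVec, mulVec_add, mulVec_smul, sub_dotProduct,
    dotProduct_add, dotProduct_smul, smul_dotProduct, smul_eq_mul] at h0
  rw [dot_ofReal V r r, dot_ofReal V s r, dot_ofReal Ω r r, dot_ofReal Ω s r,
    dot_ofReal V r s, dot_ofReal V s s, dot_ofReal Ω r s, dot_ofReal Ω s s] at h0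
  rw [symm_dot hV s r, skew_dot_self hΩ r, skew_dot_self hΩ s, skew_dot hΩ s r] at h0
  have h1 : (0:ℝ) ≤ r ⬝ᵥ V *ᵥ r + s ⬝ᵥ V *ᵥ s - 2*(r ⬝ᵥ Ω *ᵥ s) := by
    rw [← Complex.zero_le_real]
    convert h0 using 1
    push_cast
    ring_nf
    simp only [Complex.I_sq]
    ring
  linarith

/-- A quantum covariance matrix is positive definite. -/
lemma qcm_posdef {Ω V : Matrix ι ι ℝ} (hV : Vᵀ = V) (hΩ : Ωᵀ = -Ω) (hΩ2 : Ω * Ω = -1)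
    (h : IsQCM Ω V) : V.PosDef := by
  have hherm : V.IsHermitian := by
    show Vᴴ = V
    rw [conjTranspose_eq_transpose_of_trivial, hV]
  have hpsd : V.PosSemidef := by
    refine PosSemidef.of_dotProduct_mulVec_nonneg hherm fun x => ?_
    have h2 := qcm_key hV hΩ h x x
    rw [skew_dot_self hΩ x] at h2
    simp only [star_trivial]
    linarith
  refine PosDef.of_dotProduct_mulVec_pos hherm fun x hx => ?_
  rcases lt_or_eq_of_le (hpsd.dotProduct_mulVec_nonneg x) with hlt | heq
  · exact hlt
  · exfalso
    have hVx : V *ᵥ x = 0 := (hpsd.dotProduct_mulVec_zero_iff x).mp heq.symm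
    have hstarz : star (fun i => (x i : ℂ)) = (fun i => (x i : ℂ)) := by
      funext i; simp
    have hVcz : (V.map (fun t => (t : ℂ))) *ᵥ (fun i => (x i : ℂ)) = 0 := by
      rw [mulVec_ofReal, hVx]
      funext i; simp
    have hdot : star (fun i => (x i : ℂ)) ⬝ᵥ
        ((V.map (fun t => (t : ℂ)) + Complex.I • Ω.map (fun t => (t : ℂ)))
          *ᵥ (fun i => (x i : ℂ))) = 0 := by
      rw [hstarz, add_mulVec, smul_mulVec, dotProduct_add, dotProduct_smul, hVcz,
        dotProduct_zero, dot_ofReal Ω x x, skew_dot_self hΩ x]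
      simp
    have hker := ((show (V.map (fun t => (t : ℂ)) +
        Complex.I • Ω.map (fun t => (t : ℂ))).PosSemidef from h).dotProduct_mulVec_zero_iff
        (fun i => (x i : ℂ))).mp hdot
    rw [add_mulVec, smul_mulVec, hVcz, zero_add] at hker
    have hΩcz : (Ω.map (fun t => (t : ℂ))) *ᵥ (fun i => (x i : ℂ)) = 0 :=
      (smul_eq_zero.mp hker).resolve_left Complex.I_ne_zero
    have hΩx : Ω *ᵥ x = 0 := by
      rw [mulVec_ofReal] at hΩcz
      funext i
      simpa using congrFun hΩcz i
    have hx0 : x = 0 := by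
      have h2 : (Ω * Ω) *ᵥ x = 0 := by rw [← mulVec_mulVec, hΩx, mulVec_zero]
      rw [hΩ2, neg_mulVec, one_mulVec, neg_eq_zero] at h2
      exact h2
    exact hx hx0

lemma myJ_transpose : (!![(0:ℝ), 1; -1, 0])ᵀ = -!![(0:ℝ), 1; -1, 0] := by
  ext i j
  fin_cases i <;> fin_cases j <;> simp

lemma omega_skew (k : ℕ) : (Omega k)ᵀ = -(Omega k) := by
  unfold Omega
  rw [blockDiagonal_transpose]
  simp only [myJ_transpose]
  exact blockDiagonal_neg _

lemma omega_mul (k : ℕ) : Omega k * Omega k = -1 := by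
  unfold Omega
  have hJ : !![(0:ℝ), 1; -1, 0] * !![(0:ℝ), 1; -1, 0] = -1 := by
    ext i j
    fin_cases i <;> fin_cases j <;>
      simp [Matrix.mul_apply, Fin.sum_univ_succ]
  rw [← blockDiagonal_mul]
  simp only [hJ]
  rw [show (fun _ : Fin k => (-1 : Matrix (Fin 2) (Fin 2) ℝ)) = -(fun _ => 1) from rfl,
    blockDiagonal_neg]
  congr 1
  exact blockDiagonal_one

end Aux

/-- **Monogamy of the Schur complement for quantum covariance matrices.**
If `V_ABC` is a tripartite quantum covariance matrix, then
`V_AC / V_A ≥ Ω_Cᵀ (V_BC / V_B)⁻¹ Ω_C` in the Loewner order. -/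
theorem schur_complement_monogamy (nA nB nC : ℕ)
    (VA : Matrix (Fin 2 × Fin nA) (Fin 2 × Fin nA) ℝ)
    (VB : Matrix (Fin 2 × Fin nB) (Fin 2 × Fin nB) ℝ)
    (VC : Matrix (Fin 2 × Fin nC) (Fin 2 × Fin nC) ℝ)
    (X : Matrix (Fin 2 × Fin nA) (Fin 2 × Fin nB) ℝ)
    (Y : Matrix (Fin 2 × Fin nA) (Fin 2 × Fin nC) ℝ)
    (Z : Matrix (Fin 2 × Fin nB) (Fin 2 × Fin nC) ℝ)
    (hSym : (fromBlocks VA (fromCols X Y) (fromRows Xᵀ Yᵀ)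
              (fromBlocks VB Z Zᵀ VC)).IsSymm)
    (hQCM : IsQCM
      (fromBlocks (Omega nA) 0 0 (fromBlocks (Omega nB) 0 0 (Omega nC)))
      (fromBlocks VA (fromCols X Y) (fromRows Xᵀ Yᵀ) (fromBlocks VB Z Zᵀ VC))) :
    ((VC - Yᵀ * VA⁻¹ * Y) - (Omega nC)ᵀ * (VC - Zᵀ * VB⁻¹ * Z)⁻¹ * Omega nC).PosSemidef := by
  classical
  have hVfull_symm : (fromBlocks VA (fromCols X Y) (fromRows Xᵀ Yᵀ)
      (fromBlocks VB Z Zᵀ VC))ᵀ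
      = fromBlocks VA (fromCols X Y) (fromRows Xᵀ Yᵀ) (fromBlocks VB Z Zᵀ VC) := hSym
  have hΩskew : (fromBlocks (Omega nA) 0 0 (fromBlocks (Omega nB) 0 0 (Omega nC)))ᵀ
      = -(fromBlocks (Omega nA) 0 0 (fromBlocks (Omega nB) 0 0 (Omega nC))) := by
    rw [fromBlocks_transpose, fromBlocks_transpose, transpose_zero, transpose_zero,
      transpose_zero, transpose_zero, omega_skew, omega_skew, omega_skew,
      fromBlocks_neg, fromBlocks_neg, neg_zero]
    simp
  have hΩ2 : (fromBlocks (Omega nA) 0 0 (fromBlocks (Omega nB) 0 0 (Omega nC)))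
      * (fromBlocks (Omega nA) 0 0 (fromBlocks (Omega nB) 0 0 (Omega nC))) = -1 := by
    rw [fromBlocks_multiply, fromBlocks_multiply]
    simp only [omega_mul, Matrix.mul_zero, Matrix.zero_mul, add_zero, zero_add]
    rw [← fromBlocks_one, ← fromBlocks_one, fromBlocks_neg, fromBlocks_neg, neg_zero]
    simp
  have hPD := qcm_posdef hVfull_symm hΩskew hΩ2 hQCM
  have key := fun r s => qcm_key hVfull_symm hΩskew hQCM r s
  -- block symmetry facts
  have h1 := hVfull_symm
  rw [fromBlocks_transpose] at h1
  have hVA : VAᵀ = VA := by simpa using congrArg Matrix.toBlocks₁₁ h1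
  have hBC := congrArg Matrix.toBlocks₂₂ h1
  simp only [toBlocks_fromBlocks₂₂] at hBC
  rw [fromBlocks_transpose] at hBC
  have hVB : VBᵀ = VB := by simpa using congrArg Matrix.toBlocks₁₁ hBC
  have hVC : VCᵀ = VC := by simpa using congrArg Matrix.toBlocks₂₂ hBC
  -- positive definiteness of VA
  have hVA_PD : VA.PosDef := by
    refine PosDef.of_dotProduct_mulVec_pos (show VAᴴ = VA by rw [conjTranspose_eq_transpose_of_trivial, hVA]) fun a ha => ?_
    have hne : Sum.elim a (0 : (Fin 2 × Fin nB) ⊕ (Fin 2 × Fin nC) → ℝ) ≠ 0 := by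
      intro hcon
      exact ha (funext fun i => by simpa using congrFun hcon (Sum.inl i))
    have h2 := hPD.dotProduct_mulVec_pos (x := Sum.elim a 0) hne
    simpa [fromBlocks_mulVec, fromRows_mulVec, mulVec_zero, sumElim_dotProduct_sumElim, Sum.elim_comp_inl, Sum.elim_comp_inr]
      using h2
  have hVB_PD : VB.PosDef := by
    refine PosDef.of_dotProduct_mulVec_pos (show VBᴴ = VB by rw [conjTranspose_eq_transpose_of_trivial, hVB]) fun b hb => ?_
    have hne : Sum.elim (0 : Fin 2 × Fin nA → ℝ) (Sum.elim b (0 : Fin 2 × Fin nC → ℝ)) ≠ 0 := by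
      intro hcon
      exact hb (funext fun i => by simpa using congrFun hcon (Sum.inr (Sum.inl i)))
    have h2 := hPD.dotProduct_mulVec_pos (x := Sum.elim 0 (Sum.elim b 0)) hne
    simpa [fromBlocks_mulVec, fromRows_mulVec, fromCols_mulVec_sumElim, mulVec_zero,
      sumElim_dotProduct_sumElim, dotProduct_add, Sum.elim_comp_inl, Sum.elim_comp_inr]
      using h2
  have hVAdet : IsUnit VA.det := hVA_PD.det_pos.ne'.isUnit
  have hVBdet : IsUnit VB.det := hVB_PD.det_pos.ne'.isUnit
  -- general four-parameter inequality
  have ha : ∀ (v u : Fin 2 × Fin nC → ℝ) (a : Fin 2 × Fin nA → ℝ) (b : Fin 2 × Fin nB → ℝ),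
      2 * (v ⬝ᵥ Omega nC *ᵥ u) ≤
        (a ⬝ᵥ VA *ᵥ a + a ⬝ᵥ Y *ᵥ v + v ⬝ᵥ Yᵀ *ᵥ a + v ⬝ᵥ VC *ᵥ v) +
        (b ⬝ᵥ VB *ᵥ b + b ⬝ᵥ Z *ᵥ u + u ⬝ᵥ Zᵀ *ᵥ b + u ⬝ᵥ VC *ᵥ u) := by
    intro v u a b
    have h3 := key (Sum.elim a (Sum.elim 0 v)) (Sum.elim 0 (Sum.elim b u))
    simp only [fromBlocks_mulVec, fromCols_mulVec_sumElim, fromRows_mulVec,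
      Sum.elim_comp_inl, Sum.elim_comp_inr,
      dotProduct_add, sumElim_dotProduct_sumElim, mulVec_zero, zero_mulVec,
      zero_dotProduct, dotProduct_zero, add_zero, zero_add] at h3
    linarith
  -- Schur quadratic form identities
  have hMform : ∀ v : Fin 2 × Fin nC → ℝ,
      v ⬝ᵥ (VC - Yᵀ * VA⁻¹ * Y) *ᵥ v
        = v ⬝ᵥ VC *ᵥ v - (VA⁻¹ *ᵥ (Y *ᵥ v)) ⬝ᵥ (Y *ᵥ v) := by
    intro v
    have h4 : v ⬝ᵥ (Yᵀ * VA⁻¹ * Y) *ᵥ v = (VA⁻¹ *ᵥ (Y *ᵥ v)) ⬝ᵥ (Y *ᵥ v) := by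
      rw [← mulVec_mulVec, ← mulVec_mulVec, dotProduct_mulVec, vecMul_transpose,
        dotProduct_comm]
    rw [sub_mulVec, dotProduct_sub, h4]
  have hNform : ∀ u : Fin 2 × Fin nC → ℝ,
      u ⬝ᵥ (VC - Zᵀ * VB⁻¹ * Z) *ᵥ u
        = u ⬝ᵥ VC *ᵥ u - (VB⁻¹ *ᵥ (Z *ᵥ u)) ⬝ᵥ (Z *ᵥ u) := by
    intro u
    have h4 : u ⬝ᵥ (Zᵀ * VB⁻¹ * Z) *ᵥ u = (VB⁻¹ *ᵥ (Z *ᵥ u)) ⬝ᵥ (Z *ᵥ u) := by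
      rw [← mulVec_mulVec, ← mulVec_mulVec, dotProduct_mulVec, vecMul_transpose,
        dotProduct_comm]
    rw [sub_mulVec, dotProduct_sub, h4]
  -- the main inequality with optimal a, b
  have main : ∀ v u : Fin 2 × Fin nC → ℝ,
      2 * (v ⬝ᵥ Omega nC *ᵥ u) ≤
        v ⬝ᵥ (VC - Yᵀ * VA⁻¹ * Y) *ᵥ v + u ⬝ᵥ (VC - Zᵀ * VB⁻¹ * Z) *ᵥ u := by
    intro v u
    have h3 := ha v u (-(VA⁻¹ *ᵥ (Y *ᵥ v))) (-(VB⁻¹ *ᵥ (Z *ᵥ u)))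
    have hAinv : VA *ᵥ (VA⁻¹ *ᵥ (Y *ᵥ v)) = Y *ᵥ v := by
      rw [mulVec_mulVec, mul_nonsing_inv _ hVAdet, one_mulVec]
    have hBinv : VB *ᵥ (VB⁻¹ *ᵥ (Z *ᵥ u)) = Z *ᵥ u := by
      rw [mulVec_mulVec, mul_nonsing_inv _ hVBdet, one_mulVec]
    have q1 : (-(VA⁻¹ *ᵥ (Y *ᵥ v))) ⬝ᵥ VA *ᵥ (-(VA⁻¹ *ᵥ (Y *ᵥ v)))
        = (VA⁻¹ *ᵥ (Y *ᵥ v)) ⬝ᵥ (Y *ᵥ v) := by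
      rw [mulVec_neg, neg_dotProduct, dotProduct_neg, neg_neg, hAinv]
    have q2 : (-(VA⁻¹ *ᵥ (Y *ᵥ v))) ⬝ᵥ Y *ᵥ v = -((VA⁻¹ *ᵥ (Y *ᵥ v)) ⬝ᵥ (Y *ᵥ v)) := by
      rw [neg_dotProduct]
    have q3 : v ⬝ᵥ Yᵀ *ᵥ (-(VA⁻¹ *ᵥ (Y *ᵥ v))) = -((VA⁻¹ *ᵥ (Y *ᵥ v)) ⬝ᵥ (Y *ᵥ v)) := by
      rw [mulVec_neg, dotProduct_neg, dotProduct_mulVec, vecMul_transpose, dotProduct_comm]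
    have q4 : (-(VB⁻¹ *ᵥ (Z *ᵥ u))) ⬝ᵥ VB *ᵥ (-(VB⁻¹ *ᵥ (Z *ᵥ u)))
        = (VB⁻¹ *ᵥ (Z *ᵥ u)) ⬝ᵥ (Z *ᵥ u) := by
      rw [mulVec_neg, neg_dotProduct, dotProduct_neg, neg_neg, hBinv]
    have q5 : (-(VB⁻¹ *ᵥ (Z *ᵥ u))) ⬝ᵥ Z *ᵥ u = -((VB⁻¹ *ᵥ (Z *ᵥ u)) ⬝ᵥ (Z *ᵥ u)) := by
      rw [neg_dotProduct]
    have q6 : u ⬝ᵥ Zᵀ *ᵥ (-(VB⁻¹ *ᵥ (Z *ᵥ u))) = -((VB⁻¹ *ᵥ (Z *ᵥ u)) ⬝ᵥ (Z *ᵥ u)) := by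
      rw [mulVec_neg, dotProduct_neg, dotProduct_mulVec, vecMul_transpose, dotProduct_comm]
    rw [q1, q2, q3, q4, q5, q6] at h3
    rw [hMform v, hNform u]
    linarith
  -- positive definiteness of N
  have hN_symm : (VC - Zᵀ * VB⁻¹ * Z)ᵀ = VC - Zᵀ * VB⁻¹ * Z := by
    rw [transpose_sub, hVC, transpose_mul, transpose_mul, transpose_transpose,
      transpose_nonsing_inv, hVB, Matrix.mul_assoc]
  have hN_PD : (VC - Zᵀ * VB⁻¹ * Z).PosDef := by
    refine PosDef.of_dotProduct_mulVec_pos (show _ᴴ = _ by rw [conjTranspose_eq_transpose_of_trivial, hN_symm]) fun u hu => ?_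
    have hne : Sum.elim (0 : Fin 2 × Fin nA → ℝ)
        (Sum.elim (-(VB⁻¹ *ᵥ (Z *ᵥ u))) u) ≠ 0 := by
      intro hcon
      exact hu (funext fun i => by simpa using congrFun hcon (Sum.inr (Sum.inr i)))
    have h2 := hPD.dotProduct_mulVec_pos (x := Sum.elim 0 (Sum.elim (-(VB⁻¹ *ᵥ (Z *ᵥ u))) u)) hne
    simp only [star_trivial, fromBlocks_mulVec, fromCols_mulVec_sumElim, fromRows_mulVec,
      Sum.elim_comp_inl, Sum.elim_comp_inr,
      dotProduct_add, sumElim_dotProduct_sumElim, mulVec_zero, zero_mulVec,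
      zero_dotProduct, dotProduct_zero, add_zero, zero_add] at h2
    have hBinv : VB *ᵥ (VB⁻¹ *ᵥ (Z *ᵥ u)) = Z *ᵥ u := by
      rw [mulVec_mulVec, mul_nonsing_inv _ hVBdet, one_mulVec]
    have q4 : (-(VB⁻¹ *ᵥ (Z *ᵥ u))) ⬝ᵥ VB *ᵥ (-(VB⁻¹ *ᵥ (Z *ᵥ u)))
        = (VB⁻¹ *ᵥ (Z *ᵥ u)) ⬝ᵥ (Z *ᵥ u) := by
      rw [mulVec_neg, neg_dotProduct, dotProduct_neg, neg_neg, hBinv]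
    have q5 : (-(VB⁻¹ *ᵥ (Z *ᵥ u))) ⬝ᵥ Z *ᵥ u = -((VB⁻¹ *ᵥ (Z *ᵥ u)) ⬝ᵥ (Z *ᵥ u)) := by
      rw [neg_dotProduct]
    have q6 : u ⬝ᵥ Zᵀ *ᵥ (-(VB⁻¹ *ᵥ (Z *ᵥ u))) = -((VB⁻¹ *ᵥ (Z *ᵥ u)) ⬝ᵥ (Z *ᵥ u)) := by
      rw [mulVec_neg, dotProduct_neg, dotProduct_mulVec, vecMul_transpose, dotProduct_comm]
    rw [q4, q5, q6] at h2
    simp only [star_trivial]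
    rw [hNform u]
    linarith
  have hNdet : IsUnit (VC - Zᵀ * VB⁻¹ * Z).det := hN_PD.det_pos.ne'.isUnit
  have hNinv_symm : ((VC - Zᵀ * VB⁻¹ * Z)⁻¹)ᵀ = (VC - Zᵀ * VB⁻¹ * Z)⁻¹ := by
    rw [transpose_nonsing_inv, hN_symm]
  -- assemble the result
  refine PosSemidef.of_dotProduct_mulVec_nonneg ?_ ?_
  · show _ᴴ = _
    rw [conjTranspose_eq_transpose_of_trivial, transpose_sub, transpose_mul, transpose_mul,
      transpose_transpose, hNinv_symm, transpose_sub, hVC, transpose_mul, transpose_mul,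
      transpose_transpose, transpose_nonsing_inv, hVA]
    simp only [Matrix.mul_assoc]
  · intro v
    simp only [star_trivial]
    have h3 := main v (-((VC - Zᵀ * VB⁻¹ * Z)⁻¹ *ᵥ (Omega nC *ᵥ v)))
    have hNinv : (VC - Zᵀ * VB⁻¹ * Z) *ᵥ ((VC - Zᵀ * VB⁻¹ * Z)⁻¹ *ᵥ (Omega nC *ᵥ v))
        = Omega nC *ᵥ v := by
      rw [mulVec_mulVec, mul_nonsing_inv _ hNdet, one_mulVec]
    have r1 : v ⬝ᵥ Omega nC *ᵥ (-((VC - Zᵀ * VB⁻¹ * Z)⁻¹ *ᵥ (Omega nC *ᵥ v)))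
        = ((VC - Zᵀ * VB⁻¹ * Z)⁻¹ *ᵥ (Omega nC *ᵥ v)) ⬝ᵥ (Omega nC *ᵥ v) := by
      rw [mulVec_neg, dotProduct_neg, dotProduct_mulVec, vecMul_skew (omega_skew nC),
        neg_dotProduct, neg_neg, dotProduct_comm]
    have r2 : (-((VC - Zᵀ * VB⁻¹ * Z)⁻¹ *ᵥ (Omega nC *ᵥ v))) ⬝ᵥ
        (VC - Zᵀ * VB⁻¹ * Z) *ᵥ (-((VC - Zᵀ * VB⁻¹ * Z)⁻¹ *ᵥ (Omega nC *ᵥ v)))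
        = ((VC - Zᵀ * VB⁻¹ * Z)⁻¹ *ᵥ (Omega nC *ᵥ v)) ⬝ᵥ (Omega nC *ᵥ v) := by
      rw [mulVec_neg, neg_dotProduct, dotProduct_neg, neg_neg, hNinv]
    have r3 : v ⬝ᵥ ((Omega nC)ᵀ * (VC - Zᵀ * VB⁻¹ * Z)⁻¹ * Omega nC) *ᵥ v
        = ((VC - Zᵀ * VB⁻¹ * Z)⁻¹ *ᵥ (Omega nC *ᵥ v)) ⬝ᵥ (Omega nC *ᵥ v) := by
      rw [← mulVec_mulVec, ← mulVec_mulVec, dotProduct_mulVec, vecMul_transpose,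
        dotProduct_comm]
    rw [r1, r2] at h3
    rw [sub_mulVec, dotProduct_sub, r3]
    linarith
end

section
/- For every real symmetric positive definite tripartite covariance matrix V_ABC, the log-det conditional mutual information equals the log-det mutual information of the Schur complement with respect to C: I_M(A:B|C)_V = I_M(A:B)_{V_ABC/V_C}. Here V_ABC/V_C is the positive definite bipartite matrix on A⊕B obtained by eliminating the C block, whose A- and B-reductions are (V_ABC/V_C)_A = V_AC/V_C and (V_ABC/V_C)_B = V_BC/V_C. -/
open Matrix

lemma posDef_submatrix_of_injective {n m : Type*} [Fintype n] [Fintype m] [DecidableEq n]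
    [DecidableEq m] {M : Matrix n n ℝ} (hM : M.PosDef) {e : m → n} (he : Function.Injective e) :
    (M.submatrix e e).PosDef := hM.submatrix he


/-- **I_M(A:B|C) = I_M(A:B) of the Schur complement with respect to C.**
For a real symmetric positive definite tripartite covariance matrix
`V_ABC = [[A, X, Y], [Xᵀ, B, Z], [Yᵀ, Zᵀ, C]]`, the log-det conditional mutual
information equals the log-det mutual information of `V_ABC / V_C`, whose `A`- and
`B`-reductions are `A − Y C⁻¹ Yᵀ` and `B − Z C⁻¹ Zᵀ`. -/
theorem logdet_cmi_eq_mi_schur (a b c : ℕ)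
    (A : Matrix (Fin a) (Fin a) ℝ) (B : Matrix (Fin b) (Fin b) ℝ)
    (C : Matrix (Fin c) (Fin c) ℝ)
    (X : Matrix (Fin a) (Fin b) ℝ) (Y : Matrix (Fin a) (Fin c) ℝ)
    (Z : Matrix (Fin b) (Fin c) ℝ)
    (hV : (fromBlocks (fromBlocks A X Xᵀ B) (fromRows Y Z) (fromCols Yᵀ Zᵀ)
            C).PosDef) :
    (1 / 2 : ℝ) * Real.log
        (((fromBlocks A Y Yᵀ C).det * (fromBlocks B Z Zᵀ C).det) /
          (C.det *
            (fromBlocks (fromBlocks A X Xᵀ B) (fromRows Y Z) (fromCols Yᵀ Zᵀ) C).det))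
      = (1 / 2 : ℝ) * Real.log
          (((A - Y * C⁻¹ * Yᵀ).det * (B - Z * C⁻¹ * Zᵀ).det) /
            (fromBlocks A X Xᵀ B - fromRows Y Z * C⁻¹ * fromCols Yᵀ Zᵀ).det) := by
  set V := fromBlocks (fromBlocks A X Xᵀ B) (fromRows Y Z) (fromCols Yᵀ Zᵀ) C with hVdef
  have hC : C.PosDef := by
    have h := posDef_submatrix_of_injective hV (Sum.inr_injective (α := Fin a ⊕ Fin b))
    have : V.submatrix Sum.inr Sum.inr = C := by ext i j; rfl
    rwa [this] at h
  have hAC : (fromBlocks A Y Yᵀ C).PosDef := by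
    have hinj : Function.Injective
        (Sum.elim (Sum.inl ∘ Sum.inl) Sum.inr :
          Fin a ⊕ Fin c → (Fin a ⊕ Fin b) ⊕ Fin c) := by
      rintro (i | i) (j | j) h <;> simp_all
    have h := posDef_submatrix_of_injective hV hinj
    have : V.submatrix (Sum.elim (Sum.inl ∘ Sum.inl) Sum.inr)
        (Sum.elim (Sum.inl ∘ Sum.inl) Sum.inr) = fromBlocks A Y Yᵀ C := by
      ext (i | i) (j | j) <;> rfl
    rwa [this] at h
  have hBC : (fromBlocks B Z Zᵀ C).PosDef := by
    have hinj : Function.Injective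
        (Sum.elim (Sum.inl ∘ Sum.inr) Sum.inr :
          Fin b ⊕ Fin c → (Fin a ⊕ Fin b) ⊕ Fin c) := by
      rintro (i | i) (j | j) h <;> simp_all
    have h := posDef_submatrix_of_injective hV hinj
    have : V.submatrix (Sum.elim (Sum.inl ∘ Sum.inr) Sum.inr)
        (Sum.elim (Sum.inl ∘ Sum.inr) Sum.inr) = fromBlocks B Z Zᵀ C := by
      ext (i | i) (j | j) <;> rfl
    rwa [this] at h
  have hc0 : C.det ≠ 0 := hC.det_pos.ne'
  haveI : Invertible C := invertibleOfIsUnitDet C (isUnit_iff_ne_zero.mpr hc0)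
  have h1 : (fromBlocks A Y Yᵀ C).det = C.det * (A - Y * C⁻¹ * Yᵀ).det := by
    rw [det_fromBlocks₂₂, invOf_eq_nonsing_inv]
  have h2 : (fromBlocks B Z Zᵀ C).det = C.det * (B - Z * C⁻¹ * Zᵀ).det := by
    rw [det_fromBlocks₂₂, invOf_eq_nonsing_inv]
  have h3 : V.det = C.det *
      (fromBlocks A X Xᵀ B - fromRows Y Z * C⁻¹ * fromCols Yᵀ Zᵀ).det := by
    rw [hVdef, det_fromBlocks₂₂, invOf_eq_nonsing_inv]
  rw [h1, h2, h3]
  congr 1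
  rw [show C.det * (A - Y * C⁻¹ * Yᵀ).det * (C.det * (B - Z * C⁻¹ * Zᵀ).det)
      = (C.det * C.det) * ((A - Y * C⁻¹ * Yᵀ).det * (B - Z * C⁻¹ * Zᵀ).det) by ring,
    show C.det * (C.det *
        (fromBlocks A X Xᵀ B - fromRows Y Z * C⁻¹ * fromCols Yᵀ Zᵀ).det)
      = (C.det * C.det) *
        (fromBlocks A X Xᵀ B - fromRows Y Z * C⁻¹ * fromCols Yᵀ Zᵀ).det by ring,
    mul_div_mul_left _ _ (mul_ne_zero hc0 hc0)]
end

section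
/- For every real symmetric positive definite tripartite covariance matrix V_ABC, the log-det conditional mutual information equals the log-det mutual information of the inverse matrix: ½ ln(det V_AC · det V_BC / (det V_C · det V_ABC)) = ½ ln(det (V^{-1})_A · det (V^{-1})_B / det (V^{-1})_AB), where (V^{-1})_A, (V^{-1})_B and (V^{-1})_AB denote the principal submatrices of V_ABC^{-1} corresponding to the systems A, B and AB respectively. -/
open Matrix

private lemma sum_extend {m p : Type*} [Fintype m] [Fintype p] [DecidableEq m]
    {f : p → m} (hf : Function.Injective f) (x : p → ℝ) (g : m → ℝ) :
    ∑ i, Function.extend f x 0 i * g i = ∑ j, x j * g (f j) := by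
  classical
  rw [← Finset.sum_subset (Finset.subset_univ (Finset.univ.image f))]
  · rw [Finset.sum_image (fun a _ b _ h => hf h)]
    simp [hf.extend_apply]
  · intro i _ hi
    have : ¬ ∃ j, f j = i := by
      intro ⟨j, hj⟩; exact hi (Finset.mem_image.2 ⟨j, Finset.mem_univ _, hj⟩)
    rw [Function.extend_apply' _ _ _ this]
    simp

private lemma posdef_submatrix {m p : Type*} [Fintype m] [Fintype p] [DecidableEq m]
    {W : Matrix m m ℝ} (hW : W.PosDef) {f : p → m} (hf : Function.Injective f) :
    (W.submatrix f f).PosDef := by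
  classical
  refine PosDef.of_dotProduct_mulVec_pos (hW.1.submatrix f) (fun x hx => ?_)
  set y : m → ℝ := Function.extend f x 0 with hy
  have hy0 : y ≠ 0 := by
    obtain ⟨j, hj⟩ := Function.ne_iff.1 hx
    intro h
    apply hj
    have := congrFun h (f j)
    simpa [hy, hf.extend_apply] using this
  have key : dotProduct (star x) ((W.submatrix f f) *ᵥ x)
      = dotProduct (star y) (W *ᵥ y) := by
    have hmv : ∀ i, (W *ᵥ y) i = ∑ k, W i (f k) * x k := by
      intro i
      calc (W *ᵥ y) i = ∑ i', W i i' * y i' := rfl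
        _ = ∑ i', y i' * W i i' := Finset.sum_congr rfl (fun _ _ => mul_comm _ _)
        _ = ∑ k, x k * W i (f k) := sum_extend hf x (fun i' => W i i')
        _ = ∑ k, W i (f k) * x k := Finset.sum_congr rfl (fun _ _ => mul_comm _ _)
    calc dotProduct (star x) ((W.submatrix f f) *ᵥ x)
        = ∑ j, x j * ∑ k, W (f j) (f k) * x k := by
          simp [dotProduct, mulVec, star_trivial]
      _ = ∑ j, x j * (W *ᵥ y) (f j) := by
          refine Finset.sum_congr rfl (fun j _ => ?_)
          rw [hmv]
      _ = ∑ i, y i * (W *ᵥ y) i := (sum_extend hf x (W *ᵥ y)).symm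
      _ = dotProduct (star y) (W *ᵥ y) := by simp [dotProduct, star_trivial]
  rw [key]
  exact hW.dotProduct_mulVec_pos hy0

private lemma jacobi {m n : Type*} [Fintype m] [Fintype n] [DecidableEq m] [DecidableEq n]
    (W : Matrix (m ⊕ n) (m ⊕ n) ℝ) (hW : W.PosDef) :
    ((W⁻¹).submatrix Sum.inl Sum.inl).det
      = (W.submatrix Sum.inr Sum.inr).det / W.det := by
  classical
  set P := W.toBlocks₁₁
  set Q := W.toBlocks₁₂
  set R := W.toBlocks₂₁
  set S := W.toBlocks₂₂
  have hWb : W = fromBlocks P Q R S := (fromBlocks_toBlocks W).symm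
  have hS : S.PosDef := posdef_submatrix hW Sum.inr_injective
  letI : Invertible S := hS.isUnit.invertible
  letI : Invertible W := hW.isUnit.invertible
  letI : Invertible (fromBlocks P Q R S) := hWb ▸ ‹Invertible W›
  letI iSchur : Invertible (P - Q * ⅟S * R) :=
    invertibleOfFromBlocks₂₂Invertible P Q R S
  have hinv : ⅟(fromBlocks P Q R S) =
      fromBlocks (⅟(P - Q * ⅟S * R)) (-(⅟(P - Q * ⅟S * R) * Q * ⅟S))
        (-(⅟S * R * ⅟(P - Q * ⅟S * R))) (⅟S + ⅟S * R * ⅟(P - Q * ⅟S * R) * Q * ⅟S) :=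
    invOf_fromBlocks₂₂_eq P Q R S
  have hWi : W⁻¹ = ⅟(fromBlocks P Q R S) := by
    rw [invOf_eq_nonsing_inv, ← hWb]
  have hW1 : (W⁻¹).submatrix Sum.inl Sum.inl = ⅟(P - Q * ⅟S * R) := by
    rw [hWi, hinv]
    ext i j
    rfl
  have hdet : W.det = S.det * (P - Q * ⅟S * R).det := by
    conv_lhs => rw [hWb]
    exact det_fromBlocks₂₂ P Q R S
  have hSchurdet : (P - Q * ⅟S * R).det ≠ 0 := by
    have : IsUnit (P - Q * ⅟S * R) := isUnit_of_invertible _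
    exact ((isUnit_iff_isUnit_det _).1 this).ne_zero
  have hSsub : W.submatrix Sum.inr Sum.inr = S := rfl
  have hSdet : S.det ≠ 0 := hS.det_pos.ne'
  rw [hW1, hSsub, invOf_eq_nonsing_inv, det_nonsing_inv, hdet, Ring.inverse_eq_inv']
  rw [eq_div_iff (mul_ne_zero hSdet hSchurdet), mul_comm S.det, ← mul_assoc,
    inv_mul_cancel₀ hSchurdet, one_mul]

/-- **I_M(A:B|C) = I_M(A:B) of the inverse matrix.** For a real symmetric positive
definite tripartite covariance matrix `V = [[A, X, Y], [Xᵀ, B, Z], [Yᵀ, Zᵀ, C]]`,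
`½ ln(det V_AC · det V_BC / (det V_C · det V)) =
 ½ ln(det (V⁻¹)_A · det (V⁻¹)_B / det (V⁻¹)_AB)`,
where `(V⁻¹)_A`, `(V⁻¹)_B`, `(V⁻¹)_AB` are the principal submatrices of `V⁻¹` on the
indicated subsystems. -/
theorem logdet_cmi_eq_mi_inverse (a b c : ℕ)
    (A : Matrix (Fin a) (Fin a) ℝ) (B : Matrix (Fin b) (Fin b) ℝ)
    (C : Matrix (Fin c) (Fin c) ℝ)
    (X : Matrix (Fin a) (Fin b) ℝ) (Y : Matrix (Fin a) (Fin c) ℝ)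
    (Z : Matrix (Fin b) (Fin c) ℝ)
    (hV : (fromBlocks (fromBlocks A X Xᵀ B) (fromRows Y Z) (fromCols Yᵀ Zᵀ)
            C).PosDef) :
    (1 / 2 : ℝ) * Real.log
        (((fromBlocks A Y Yᵀ C).det * (fromBlocks B Z Zᵀ C).det) /
          (C.det *
            (fromBlocks (fromBlocks A X Xᵀ B) (fromRows Y Z) (fromCols Yᵀ Zᵀ) C).det))
      = (1 / 2 : ℝ) * Real.log
          ((((fromBlocks (fromBlocks A X Xᵀ B) (fromRows Y Z) (fromCols Yᵀ Zᵀ) C)⁻¹).submatrix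
                (Sum.inl ∘ Sum.inl : Fin a → (Fin a ⊕ Fin b) ⊕ Fin c)
                (Sum.inl ∘ Sum.inl)).det *
              (((fromBlocks (fromBlocks A X Xᵀ B) (fromRows Y Z) (fromCols Yᵀ Zᵀ) C)⁻¹).submatrix
                (Sum.inl ∘ Sum.inr : Fin b → (Fin a ⊕ Fin b) ⊕ Fin c)
                (Sum.inl ∘ Sum.inr)).det /
            (((fromBlocks (fromBlocks A X Xᵀ B) (fromRows Y Z) (fromCols Yᵀ Zᵀ) C)⁻¹).submatrix
                (Sum.inl : Fin a ⊕ Fin b → (Fin a ⊕ Fin b) ⊕ Fin c) Sum.inl).det) := by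
  classical
  set V := fromBlocks (fromBlocks A X Xᵀ B) (fromRows Y Z) (fromCols Yᵀ Zᵀ) C with hVdef
  have hdV : V.det ≠ 0 := hV.det_pos.ne'
  -- the AB block
  have h3 : ((V⁻¹).submatrix (Sum.inl : Fin a ⊕ Fin b → _) Sum.inl).det
      = C.det / V.det := by
    have := jacobi V hV
    rw [this]
    congr 1
  -- the A block
  have h1 : ((V⁻¹).submatrix (Sum.inl ∘ Sum.inl : Fin a → _) (Sum.inl ∘ Sum.inl)).det
      = (fromBlocks B Z Zᵀ C).det / V.det := by
    set e : (Fin a ⊕ (Fin b ⊕ Fin c)) ≃ ((Fin a ⊕ Fin b) ⊕ Fin c) :=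
      (Equiv.sumAssoc _ _ _).symm
    have hW : (V.submatrix e e).PosDef := posdef_submatrix hV e.injective
    have hj := jacobi (V.submatrix e e) hW
    have hinv : (V.submatrix e e)⁻¹ = (V⁻¹).submatrix e e := inv_submatrix_equiv V e e
    have hl : ((V.submatrix e e)⁻¹).submatrix Sum.inl Sum.inl
        = (V⁻¹).submatrix (Sum.inl ∘ Sum.inl : Fin a → _) (Sum.inl ∘ Sum.inl) := by
      rw [hinv, submatrix_submatrix]
      rfl
    have hr : (V.submatrix e e).submatrix Sum.inr Sum.inr = fromBlocks B Z Zᵀ C := by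
      ext i j
      cases i <;> cases j <;> rfl
    have hd : (V.submatrix e e).det = V.det := det_submatrix_equiv_self e V
    rw [hl, hr, hd] at hj
    exact hj
  -- the B block
  have h2 : ((V⁻¹).submatrix (Sum.inl ∘ Sum.inr : Fin b → _) (Sum.inl ∘ Sum.inr)).det
      = (fromBlocks A Y Yᵀ C).det / V.det := by
    set e : (Fin b ⊕ (Fin a ⊕ Fin c)) ≃ ((Fin a ⊕ Fin b) ⊕ Fin c) :=
      ((Equiv.sumAssoc _ _ _).symm).trans
        (Equiv.sumCongr (Equiv.sumComm (Fin b) (Fin a)) (Equiv.refl (Fin c)))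
    have hW : (V.submatrix e e).PosDef := posdef_submatrix hV e.injective
    have hj := jacobi (V.submatrix e e) hW
    have hinv : (V.submatrix e e)⁻¹ = (V⁻¹).submatrix e e := inv_submatrix_equiv V e e
    have hl : ((V.submatrix e e)⁻¹).submatrix Sum.inl Sum.inl
        = (V⁻¹).submatrix (Sum.inl ∘ Sum.inr : Fin b → _) (Sum.inl ∘ Sum.inr) := by
      rw [hinv, submatrix_submatrix]
      rfl
    have hr : (V.submatrix e e).submatrix Sum.inr Sum.inr = fromBlocks A Y Yᵀ C := by
      ext i j
      cases i <;> cases j <;> rfl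
    have hd : (V.submatrix e e).det = V.det := det_submatrix_equiv_self e V
    rw [hl, hr, hd] at hj
    exact hj
  rw [h1, h2, h3]
  congr 2
  have hC : C.PosDef := posdef_submatrix hV Sum.inr_injective
  have hdC : C.det ≠ 0 := hC.det_pos.ne'
  field_simp
end

section
/- Let V and W be real symmetric positive definite matrices with the same bipartite block partition into systems A and B, and let t ∈ [0,1]. Then the log-det mutual information is convex along the geodesic of the trace metric: I_M(A:B)_{V #_t W} ≤ (1−t)·I_M(A:B)_V + t·I_M(A:B)_W, where V #_t W := V^{1/2} (V^{-1/2} W V^{-1/2})^t V^{1/2} is the weighted geometric mean (a positive definite matrix with the same block partition). -/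
open Matrix

/-- Real power of a Hermitian (real symmetric) matrix via the spectral decomposition
(junk value `0` on non-Hermitian matrices). -/
noncomputable def rpowMat {ι : Type} [Fintype ι] [DecidableEq ι]
    (M : Matrix ι ι ℝ) (t : ℝ) : Matrix ι ι ℝ :=
  if h : M.IsHermitian then
    (h.eigenvectorUnitary : Matrix ι ι ℝ) *
      Matrix.diagonal (fun i => h.eigenvalues i ^ t) *
      star (h.eigenvectorUnitary : Matrix ι ι ℝ)
  else 0

/-- The weighted geometric mean `M #_t N := M^{1/2} (M^{-1/2} N M^{-1/2})^t M^{1/2}`. -/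
noncomputable def wGeomMean {ι : Type} [Fintype ι] [DecidableEq ι]
    (M N : Matrix ι ι ℝ) (t : ℝ) : Matrix ι ι ℝ :=
  rpowMat M (1 / 2) *
    rpowMat (rpowMat M (-(1 / 2)) * N * rpowMat M (-(1 / 2))) t *
    rpowMat M (1 / 2)

/-- Log-det mutual information `I_M(A:B)_V = ½ ln(det V_A · det V_B / det V)` of a
bipartite matrix. -/
noncomputable def IM {a b : ℕ} (V : Matrix (Fin a ⊕ Fin b) (Fin a ⊕ Fin b) ℝ) : ℝ :=
  (1 / 2 : ℝ) * Real.log ((V.toBlocks₁₁.det * V.toBlocks₂₂.det) / V.det)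

namespace GeoIM

variable {ι : Type} [Fintype ι] [DecidableEq ι]

lemma rpowMat_eq {M : Matrix ι ι ℝ} (hM : M.IsHermitian) (t : ℝ) :
    rpowMat M t = (hM.eigenvectorUnitary : Matrix ι ι ℝ) *
      Matrix.diagonal (fun i => hM.eigenvalues i ^ t) *
      star (hM.eigenvectorUnitary : Matrix ι ι ℝ) := dif_pos hM

lemma posDef_conj {n' m' : Type} [Fintype n'] [DecidableEq n'] [Fintype m'] [DecidableEq m']
    {A : Matrix n' n' ℝ} (hA : A.PosDef) (B : Matrix n' m' ℝ)
    (hB : ∀ x : m' → ℝ, x ≠ 0 → B *ᵥ x ≠ 0) : (Bᴴ * A * B).PosDef := by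
  refine .of_dotProduct_mulVec_pos (isHermitian_conjTranspose_mul_mul B hA.1) fun x hx => ?_
  have := hA.dotProduct_mulVec_pos (hB x hx)
  simpa only [star_mulVec, dotProduct_mulVec, vecMul_vecMul] using this

lemma rpowMat_mul_rpowMat {M : Matrix ι ι ℝ} (hM : M.PosDef) (s t : ℝ) :
    rpowMat M s * rpowMat M t = rpowMat M (s + t) := by
  simp only [rpowMat_eq hM.1]
  set U := (hM.1.eigenvectorUnitary : Matrix ι ι ℝ) with hU
  have h1 : star U * U = 1 := mem_unitaryGroup_iff'.mp hM.1.eigenvectorUnitary.2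
  simp only [Matrix.mul_assoc]
  rw [← Matrix.mul_assoc (star U) U, h1, Matrix.one_mul,
    ← Matrix.mul_assoc (Matrix.diagonal _), Matrix.diagonal_mul_diagonal]
  have : (fun i => hM.1.eigenvalues i ^ s * hM.1.eigenvalues i ^ t)
      = fun i => hM.1.eigenvalues i ^ (s + t) :=
    funext fun i => (Real.rpow_add (hM.eigenvalues_pos i) s t).symm
  rw [this]

lemma rpowMat_zero {M : Matrix ι ι ℝ} (hM : M.IsHermitian) : rpowMat M 0 = 1 := by
  rw [rpowMat_eq hM]
  have h1 : (hM.eigenvectorUnitary : Matrix ι ι ℝ) * star (hM.eigenvectorUnitary : Matrix ι ι ℝ) = 1 :=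
    mem_unitaryGroup_iff.mp hM.eigenvectorUnitary.2
  simp only [Real.rpow_zero, Matrix.diagonal_one, Matrix.mul_one, h1]

lemma rpowMat_one {M : Matrix ι ι ℝ} (hM : M.IsHermitian) : rpowMat M 1 = M := by
  rw [rpowMat_eq hM]
  simp only [Real.rpow_one]
  rw [show (fun i => hM.eigenvalues i) = (RCLike.ofReal ∘ hM.eigenvalues) from
    funext fun i => by simp [RCLike.ofReal_real_eq_id]]
  exact hM.spectral_theorem.symm

lemma rpowMat_posDef {M : Matrix ι ι ℝ} (hM : M.PosDef) (t : ℝ) : (rpowMat M t).PosDef := by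
  rw [rpowMat_eq hM.1]
  set U := (hM.1.eigenvectorUnitary : Matrix ι ι ℝ) with hU
  have hD : (Matrix.diagonal (fun i => hM.1.eigenvalues i ^ t)).PosDef :=
    Matrix.posDef_diagonal_iff.mpr fun i => Real.rpow_pos_of_pos (hM.eigenvalues_pos i) t
  have hUU : U * star U = 1 := mem_unitaryGroup_iff.mp hM.1.eigenvectorUnitary.2
  have := posDef_conj hD (star U) (fun x hx h0 => by
    apply hx
    have : (U * star U) *ᵥ x = U *ᵥ (star U *ᵥ x) := by rw [Matrix.mulVec_mulVec]
    rw [hUU, Matrix.one_mulVec] at this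
    rw [this, h0, Matrix.mulVec_zero])
  simpa only [Matrix.star_eq_conjTranspose, Matrix.conjTranspose_conjTranspose] using this

lemma ctr {α β : Type*} (A : Matrix α β ℝ) : Aᴴ = Aᵀ := by
  ext i j; simp [Matrix.conjTranspose_apply]

lemma psd_det_nonneg {A : Matrix ι ι ℝ} (hA : A.PosSemidef) : 0 ≤ A.det := by
  rw [hA.1.det_eq_prod_eigenvalues]
  exact Finset.prod_nonneg fun i _ => by
    simpa using hA.eigenvalues_nonneg i

lemma psd_posDef_of_isUnit {A : Matrix ι ι ℝ} (hA : A.PosSemidef) (h : IsUnit A.det) :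
    A.PosDef := by
  refine .of_dotProduct_mulVec_pos hA.1 fun x hx => ?_
  rcases lt_or_eq_of_le (hA.dotProduct_mulVec_nonneg x) with hlt | heq
  · exact hlt
  · exfalso
    apply hx
    have h0 : A *ᵥ x = 0 := (hA.dotProduct_mulVec_zero_iff x).mp heq.symm
    have := congrArg (fun v => A⁻¹ *ᵥ v) h0
    simpa [Matrix.mulVec_mulVec, Matrix.nonsing_inv_mul A h] using this

lemma det_one_add_psd {T : Matrix ι ι ℝ} (hT : T.PosSemidef) : 1 ≤ (1 + T).det := by
  set U := (hT.1.eigenvectorUnitary : Matrix ι ι ℝ) with hU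
  have hUU : U * star U = 1 := mem_unitaryGroup_iff.mp hT.1.eigenvectorUnitary.2
  have hspec : T = U * Matrix.diagonal hT.1.eigenvalues * star U := by
    have := hT.1.spectral_theorem
    rwa [RCLike.ofReal_real_eq_id, Function.id_comp] at this
  have hdiag : (1 : Matrix ι ι ℝ) + Matrix.diagonal hT.1.eigenvalues
      = Matrix.diagonal (fun i => 1 + hT.1.eigenvalues i) := by
    rw [← Matrix.diagonal_one, Matrix.diagonal_add]
  have key : 1 + T = U * Matrix.diagonal (fun i => 1 + hT.1.eigenvalues i) * star U := by
    rw [← hdiag, Matrix.mul_add, Matrix.add_mul, Matrix.mul_one, hUU, ← hspec]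
  have hdU : U.det * (star U).det = 1 := by rw [← Matrix.det_mul, hUU, Matrix.det_one]
  calc (1:ℝ) = ∏ _i : ι, (1:ℝ) := Finset.prod_const_one.symm
    _ ≤ ∏ i : ι, (1 + hT.1.eigenvalues i) :=
        Finset.prod_le_prod (fun i _ => by norm_num)
          (fun i _ => by linarith [hT.eigenvalues_nonneg i])
    _ = (Matrix.diagonal (fun i => 1 + hT.1.eigenvalues i)).det := (Matrix.det_diagonal).symm
    _ = (Matrix.diagonal (fun i => 1 + hT.1.eigenvalues i)).det * (U.det * (star U).det) := by
        rw [hdU, mul_one]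
    _ = U.det * (Matrix.diagonal (fun i => 1 + hT.1.eigenvalues i)).det * (star U).det := by ring
    _ = (1 + T).det := by rw [key, Matrix.det_mul, Matrix.det_mul]

lemma det_le_det_add {P Q : Matrix ι ι ℝ} (hP : P.PosSemidef) (hQ : Q.PosSemidef) :
    P.det ≤ (P + Q).det := by
  by_cases h : IsUnit P.det
  · have hPd := psd_posDef_of_isUnit hP h
    set Ph := rpowMat P (1/2) with hPh'
    set Pn := rpowMat P (-(1/2)) with hPn'
    have hPh := rpowMat_posDef hPd (1/2)
    have hPn := rpowMat_posDef hPd (-(1/2))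
    have h0 : Ph * Pn = 1 := by
      rw [hPh', hPn', rpowMat_mul_rpowMat hPd]; norm_num [rpowMat_zero hPd.1]
    have h0' : Pn * Ph = 1 := by
      rw [hPh', hPn', rpowMat_mul_rpowMat hPd]; norm_num [rpowMat_zero hPd.1]
    have h1 : Ph * Ph = P := by
      rw [hPh', rpowMat_mul_rpowMat hPd]; norm_num [rpowMat_one hPd.1]
    have hT : (Pn * Q * Pn).PosSemidef := by
      have := hQ.conjTranspose_mul_mul_same Pn
      rwa [hPn.1.eq] at this
    have key : Ph * (1 + (Pn * Q * Pn)) * Ph = P + Q := by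
      rw [Matrix.mul_add, Matrix.add_mul, Matrix.mul_one, h1]
      congr 1
      rw [show Ph * (Pn * Q * Pn) * Ph = Ph * Pn * Q * (Pn * Ph) from by
        simp only [Matrix.mul_assoc], h0, h0', Matrix.one_mul, Matrix.mul_one]
    have hdet1 : 1 ≤ (1 + (Pn * Q * Pn)).det := det_one_add_psd hT
    have hPhd := hPh.det_pos
    calc P.det = Ph.det * 1 * Ph.det := by rw [mul_one, ← Matrix.det_mul, h1]
      _ ≤ Ph.det * (1 + (Pn * Q * Pn)).det * Ph.det := by
          have := mul_le_mul_of_nonneg_left hdet1 hPhd.le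
          exact mul_le_mul_of_nonneg_right this hPhd.le
      _ = (Ph * (1 + (Pn * Q * Pn)) * Ph).det := by rw [Matrix.det_mul, Matrix.det_mul]
      _ = (P + Q).det := by rw [key]
  · have hdet : P.det = 0 := by
      by_contra hne
      exact h (isUnit_iff_ne_zero.mpr hne)
    rw [hdet]
    exact psd_det_nonneg (hP.add hQ)

lemma det_sq_le {p : Type} [Fintype p] [DecidableEq p] (M N : Matrix p ι ℝ)
    (hM : (M * Mᵀ).PosDef) (hN : (N * Nᵀ).PosDef) :
    det (M * Nᵀ) ^ 2 ≤ det (M * Mᵀ) * det (N * Nᵀ) := by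
  have hL : fromRows M N * (fromRows M N)ᴴ
      = fromBlocks (M*Mᵀ) (M*Nᵀ) (N*Mᵀ) (N*Nᵀ) := by
    rw [ctr, transpose_fromRows, fromRows_mul_fromCols]
  have hpsd : (fromBlocks (M*Mᵀ) (M*Nᵀ) (N*Mᵀ) (N*Nᵀ)).PosSemidef :=
    hL ▸ posSemidef_self_mul_conjTranspose _
  have hX : (M * Nᵀ)ᴴ = N * Mᵀ := by rw [ctr, Matrix.transpose_mul, Matrix.transpose_transpose]
  haveI := Matrix.invertibleOfIsUnitDet (M*Mᵀ) hM.det_pos.ne'.isUnit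
  have hschur : ((N*Nᵀ) - (M*Nᵀ)ᴴ * (M*Mᵀ)⁻¹ * (M*Nᵀ)).PosSemidef :=
    (Matrix.PosDef.fromBlocks₁₁ _ _ hM).mp (by rwa [hX])
  have hP : ((M*Nᵀ)ᴴ * (M*Mᵀ)⁻¹ * (M*Nᵀ)).PosSemidef :=
    hM.inv.posSemidef.conjTranspose_mul_mul_same _
  have hle : ((M*Nᵀ)ᴴ * (M*Mᵀ)⁻¹ * (M*Nᵀ)).det ≤ (N*Nᵀ).det := by
    have h2 := det_le_det_add hP hschur
    have e : (M*Nᵀ)ᴴ * (M*Mᵀ)⁻¹ * (M*Nᵀ) + ((N*Nᵀ) - (M*Nᵀ)ᴴ * (M*Mᵀ)⁻¹ * (M*Nᵀ)) = N*Nᵀ := by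
      abel
    rwa [e] at h2
  have hdet : ((M*Nᵀ)ᴴ * (M*Mᵀ)⁻¹ * (M*Nᵀ)).det = det (M*Nᵀ)^2 * (det (M*Mᵀ))⁻¹ := by
    rw [Matrix.det_mul, Matrix.det_mul, Matrix.det_nonsing_inv, ctr, Matrix.det_transpose, Ring.inverse_eq_inv']
    ring
  rw [hdet] at hle
  have hA := hM.det_pos
  calc det (M*Nᵀ)^2 = det (M*Nᵀ)^2 * (det (M*Mᵀ))⁻¹ * det (M*Mᵀ) := by field_simp
    _ ≤ det (N*Nᵀ) * det (M*Mᵀ) := mul_le_mul_of_nonneg_right hle hA.le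
    _ = det (M*Mᵀ) * det (N*Nᵀ) := mul_comm _ _
lemma le_affine_of_midpoint {f : ℝ → ℝ} (hc : Continuous f)
    (hm : ∀ s u : ℝ, f ((s + u) / 2) ≤ (f s + f u) / 2)
    {t : ℝ} (ht : t ∈ Set.Icc (0:ℝ) 1) : f t ≤ (1 - t) * f 0 + t * f 1 := by
  obtain ⟨g, hg⟩ : ∃ g : ℝ → ℝ, g = fun y => f y - ((1 - y) * f 0 + y * f 1) := ⟨_, rfl⟩
  have hgc : Continuous g := by
    rw [hg]
    apply hc.sub
    fun_prop
  have hgm : ∀ s u : ℝ, g ((s + u) / 2) ≤ (g s + g u) / 2 := by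
    intro s u
    have h1 := hm s u
    simp only [hg]
    ring_nf
    ring_nf at h1
    linarith
  have hg0 : g 0 = 0 := by simp [hg]
  have hg1 : g 1 = 0 := by simp [hg]
  suffices h : g t ≤ 0 by
    simp only [hg] at h; linarith
  obtain ⟨x₀, hx₀, hmax⟩ := (isCompact_Icc : IsCompact (Set.Icc (0:ℝ) 1)).exists_isMaxOn
    ⟨0, by norm_num⟩ hgc.continuousOn
  by_cases hc0 : g x₀ ≤ 0
  · exact le_trans (hmax ht) hc0
  push_neg at hc0
  exfalso
  set Mset := {y : ℝ | y ∈ Set.Icc (0:ℝ) 1 ∧ g y = g x₀} with hM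
  have hMne : Mset.Nonempty := ⟨x₀, hx₀, rfl⟩
  have hMclosed : IsClosed Mset := by
    have : Mset = Set.Icc (0:ℝ) 1 ∩ g ⁻¹' {g x₀} := by
      ext y; simp [hM, Set.mem_inter_iff]
    rw [this]
    exact isClosed_Icc.inter (isClosed_singleton.preimage hgc)
  have hMbdd : BddBelow Mset := ⟨0, fun y hy => hy.1.1⟩
  set x := sInf Mset with hx
  have hxM : x ∈ Mset := hMclosed.csInf_mem hMne hMbdd
  obtain ⟨⟨hx0le, hx1le⟩, hgx⟩ := hxM
  have hx0 : x ≠ 0 := by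
    intro hh; rw [hh, hg0] at hgx; exact absurd hgx.symm (ne_of_gt hc0)
  have hx1 : x ≠ 1 := by
    intro hh; rw [hh, hg1] at hgx; exact absurd hgx.symm (ne_of_gt hc0)
  have hx0' : 0 < x := lt_of_le_of_ne hx0le (Ne.symm hx0)
  have hx1' : x < 1 := lt_of_le_of_ne hx1le hx1
  set h := min x (1 - x) with hh
  have hhpos : 0 < h := lt_min hx0' (by linarith)
  have hxinf : sInf Mset = x := hx.symm
  clear_value x h
  have hs : x - h ∈ Set.Icc (0:ℝ) 1 := by
    constructor
    · have : h ≤ x := hh ▸ min_le_left _ _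
      linarith
    · linarith [hhpos]
  have hu : x + h ∈ Set.Icc (0:ℝ) 1 := by
    constructor
    · linarith [hhpos]
    · have : h ≤ 1 - x := hh ▸ min_le_right _ _
      linarith
  have hgs : g (x - h) ≤ g x₀ := hmax hs
  have hgu : g (x + h) ≤ g x₀ := hmax hu
  have hmid : g x ≤ (g (x - h) + g (x + h)) / 2 := by
    have := hgm (x - h) (x + h)
    have e : (x - h + (x + h)) / 2 = x := by ring
    rwa [e] at this
  have hgseq : g (x - h) = g x₀ := by
    apply le_antisymm hgs
    linarith
  have hsM : x - h ∈ Mset := ⟨hs, hgseq⟩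
  have h2 : sInf Mset ≤ x - h := csInf_le hMbdd hsM
  rw [← hx] at h2
  linarith

lemma mul_diag_mul_t_apply {p : Type} [Fintype p] (A : Matrix p ι ℝ) (d : ι → ℝ) (i j : p) :
    (A * Matrix.diagonal d * Aᵀ) i j = ∑ k, A i k * d k * A j k := by
  rw [Matrix.mul_apply]
  simp only [Matrix.mul_diagonal, Matrix.transpose_apply]

lemma conj_diag_mul {p : Type} [Fintype p] (R : Matrix p ι ℝ) (a b : ι → ℝ) :
    (R * Matrix.diagonal a) * (R * Matrix.diagonal b)ᵀ
      = R * Matrix.diagonal (fun i => a i * b i) * Rᵀ := by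
  rw [Matrix.transpose_mul, Matrix.diagonal_transpose, Matrix.mul_assoc,
    ← Matrix.mul_assoc (Matrix.diagonal a), Matrix.diagonal_mul_diagonal,
    ← Matrix.mul_assoc]

lemma log_det_rpow_diag_le {p : Type} [Fintype p] [DecidableEq p]
    (R : Matrix p ι ℝ) (μ : ι → ℝ) (hμ : ∀ i, 0 < μ i)
    (hpd : ∀ d : ι → ℝ, (∀ i, 0 < d i) → (R * Matrix.diagonal d * Rᵀ).PosDef)
    {t : ℝ} (ht : t ∈ Set.Icc (0:ℝ) 1) :
    Real.log (R * Matrix.diagonal (fun i => μ i ^ t) * Rᵀ).det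
      ≤ (1 - t) * Real.log (R * Matrix.diagonal (fun i => μ i ^ (0:ℝ)) * Rᵀ).det
        + t * Real.log (R * Matrix.diagonal (fun i => μ i ^ (1:ℝ)) * Rᵀ).det := by
  set f : ℝ → ℝ := fun u => Real.log (R * Matrix.diagonal (fun i => μ i ^ u) * Rᵀ).det with hf
  have hposd : ∀ u : ℝ, (R * Matrix.diagonal (fun i => μ i ^ u) * Rᵀ).PosDef :=
    fun u => hpd _ (fun i => Real.rpow_pos_of_pos (hμ i) u)
  have hcont : Continuous f := by
    have hdet : Continuous (fun u : ℝ => (R * Matrix.diagonal (fun i => μ i ^ u) * Rᵀ).det) := by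
      apply Continuous.matrix_det
      apply continuous_matrix
      intro i j
      have hsum : Continuous (fun u : ℝ => ∑ k, R i k * μ k ^ u * R j k) := by
        refine continuous_finset_sum _ fun k _ => ?_
        exact (continuous_const.mul ((Real.continuous_exp.comp
          (continuous_const.mul continuous_id)).congr
            fun u => (Real.rpow_def_of_pos (hμ k) u).symm)).mul continuous_const
      exact hsum.congr fun u => (mul_diag_mul_t_apply R _ i j).symm
    exact hdet.log fun u => (hposd u).det_pos.ne'
  have hmid : ∀ s u : ℝ, f ((s + u) / 2) ≤ (f s + f u) / 2 := by
    intro s u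
    set Ms := R * Matrix.diagonal (fun i => μ i ^ (s/2)) with hMs
    set Mu := R * Matrix.diagonal (fun i => μ i ^ (u/2)) with hMu
    have half : ∀ v w : ℝ, (fun i => μ i ^ (v/2) * μ i ^ (w/2)) = fun i => μ i ^ ((v+w)/2) := by
      intro v w; funext i
      rw [← Real.rpow_add (hμ i)]
      congr 1
      ring
    have hMsMs : Ms * Msᵀ = R * Matrix.diagonal (fun i => μ i ^ s) * Rᵀ := by
      rw [hMs, conj_diag_mul, half s s, show (s+s)/2 = s by ring]
    have hMuMu : Mu * Muᵀ = R * Matrix.diagonal (fun i => μ i ^ u) * Rᵀ := by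
      rw [hMu, conj_diag_mul, half u u, show (u+u)/2 = u by ring]
    have hMsMu : Ms * Muᵀ = R * Matrix.diagonal (fun i => μ i ^ ((s+u)/2)) * Rᵀ := by
      rw [hMs, hMu, conj_diag_mul, half s u]
    have hMss : (Ms * Msᵀ).PosDef := by rw [hMsMs]; exact hposd s
    have hMuu : (Mu * Muᵀ).PosDef := by rw [hMuMu]; exact hposd u
    have hMsu : (Ms * Muᵀ).PosDef := by rw [hMsMu]; exact hposd ((s+u)/2)
    have hcs := det_sq_le Ms Mu hMss hMuu
    have hlog : Real.log ((Ms * Muᵀ).det ^ 2) ≤ Real.log ((Ms * Msᵀ).det * (Mu * Muᵀ).det) :=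
      Real.log_le_log (pow_pos hMsu.det_pos 2) hcs
    rw [Real.log_pow, Real.log_mul hMss.det_pos.ne' hMuu.det_pos.ne'] at hlog
    simp only [hf]
    rw [← hMsMs, ← hMuMu, ← hMsMu]
    push_cast at hlog
    linarith
  exact le_affine_of_midpoint hcont hmid ht

lemma posDef_submatrix {n' m' : Type} [Fintype n'] [DecidableEq n'] [Fintype m'] [DecidableEq m']
    {M : Matrix n' n' ℝ} (hM : M.PosDef) (e : m' → n') (he : Function.Injective e) :
    (M.submatrix e e).PosDef := by
  refine .of_dotProduct_mulVec_pos (hM.posSemidef.submatrix e).1 fun x hx => ?_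
  set y : n' → ℝ := fun k => ∑ i, if k = e i then x i else 0 with hy
  have hyg : ∀ g : n' → ℝ, (∑ k, y k * g k) = ∑ i, x i * g (e i) := by
    intro g
    simp only [hy, Finset.sum_mul, ite_mul, zero_mul]
    rw [Finset.sum_comm]
    refine Finset.sum_congr rfl fun i _ => ?_
    simp
  have hy0 : y ≠ 0 := by
    obtain ⟨i, hi⟩ := Function.ne_iff.mp hx
    intro h0
    apply hi
    have hval : y (e i) = x i := by
      simp only [hy]
      rw [Finset.sum_eq_single i]
      · simp
      · intro j _ hji
        have : e i ≠ e j := fun h => hji (he h).symm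
        simp [this]
      · intro hmem; exact absurd (Finset.mem_univ i) hmem
    rw [h0] at hval
    simpa using hval.symm
  have hform := hM.dotProduct_mulVec_pos hy0
  have expand : star y ⬝ᵥ (M *ᵥ y) = star x ⬝ᵥ (M.submatrix e e *ᵥ x) := by
    simp only [dotProduct, Matrix.mulVec, Matrix.submatrix_apply, Pi.star_apply, star_trivial]
    rw [hyg (fun k => ∑ l, M k l * y l)]
    refine Finset.sum_congr rfl fun i _ => ?_
    congr 1
    have h2 := hyg (fun l => M (e i) l)
    calc (∑ l, M (e i) l * y l) = ∑ l, y l * M (e i) l := by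
          refine Finset.sum_congr rfl fun l _ => mul_comm _ _
      _ = ∑ j, x j * M (e i) (e j) := h2
      _ = ∑ j, M (e i) (e j) * x j := by
          refine Finset.sum_congr rfl fun j _ => mul_comm _ _
  rw [← expand]
  exact hform

lemma IM_eq {a b : ℕ} (X : Matrix (Fin a ⊕ Fin b) (Fin a ⊕ Fin b) ℝ)
    (h1 : 0 < X.toBlocks₁₁.det) (h2 : 0 < X.toBlocks₂₂.det) (h3 : 0 < X.det) :
    IM X = (1/2 : ℝ) * (Real.log X.toBlocks₁₁.det + Real.log X.toBlocks₂₂.det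
      - Real.log X.det) := by
  rw [IM, Real.log_div (mul_pos h1 h2).ne' h3.ne', Real.log_mul h1.ne' h2.ne']

end GeoIM

open GeoIM in
/-- **Geodesic convexity of the log-det mutual information.** For positive definite
bipartite `V`, `W` and `t ∈ [0,1]`,
`I_M(A:B)_{V #_t W} ≤ (1−t)·I_M(A:B)_V + t·I_M(A:B)_W`. -/
theorem IM_convex_geodesic (a b : ℕ)
    (V W : Matrix (Fin a ⊕ Fin b) (Fin a ⊕ Fin b) ℝ)
    (hV : V.PosDef) (hW : W.PosDef) (t : ℝ) (ht : t ∈ Set.Icc (0 : ℝ) 1) :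
    IM (wGeomMean V W t) ≤ (1 - t) * IM V + t * IM W := by
  classical
  have h0 : rpowMat V (1/2) * rpowMat V (-(1/2)) = 1 := by
    rw [rpowMat_mul_rpowMat hV]
    norm_num [rpowMat_zero hV.1]
  have h0' : rpowMat V (-(1/2)) * rpowMat V (1/2) = 1 := by
    rw [rpowMat_mul_rpowMat hV]
    norm_num [rpowMat_zero hV.1]
  have h1 : rpowMat V (1/2) * rpowMat V (1/2) = V := by
    rw [rpowMat_mul_rpowMat hV]
    norm_num [rpowMat_one hV.1]
  have hPh : (rpowMat V (1/2)).PosDef := rpowMat_posDef hV (1/2)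
  have hPn : (rpowMat V (-(1/2))).PosDef := rpowMat_posDef hV (-(1/2))
  have hinj : ∀ x : (Fin a ⊕ Fin b) → ℝ, x ≠ 0 → rpowMat V (-(1/2)) *ᵥ x ≠ 0 := by
    intro x hx hx0
    apply hx
    have h2 : (rpowMat V (1/2) * rpowMat V (-(1/2))) *ᵥ x
        = rpowMat V (1/2) *ᵥ (rpowMat V (-(1/2)) *ᵥ x) := (Matrix.mulVec_mulVec _ _ _).symm
    rw [h0, Matrix.one_mulVec, hx0, Matrix.mulVec_zero] at h2
    exact h2
  set C := rpowMat V (-(1/2)) * W * rpowMat V (-(1/2)) with hCdef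
  have hC : C.PosDef := by
    have h3 := posDef_conj hW (rpowMat V (-(1/2))) hinj
    rwa [hPn.1.eq] at h3
  set U := (hC.1.eigenvectorUnitary : Matrix (Fin a ⊕ Fin b) (Fin a ⊕ Fin b) ℝ) with hUdef
  set μ := hC.1.eigenvalues with hμdef
  have hμ : ∀ i, 0 < μ i := hC.eigenvalues_pos
  set S := rpowMat V (1/2) * U with hSdef
  have hUU : U * star U = 1 := mem_unitaryGroup_iff.mp hC.1.eigenvectorUnitary.2
  have hUU' : star U * U = 1 := mem_unitaryGroup_iff'.mp hC.1.eigenvectorUnitary.2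
  have hSt : Sᵀ = star U * rpowMat V (1/2) := by
    rw [hSdef, Matrix.transpose_mul, Matrix.star_eq_conjTranspose, ctr]
    congr 1
    rw [← ctr, hPh.1.eq]
  have hSd : ∀ d : (Fin a ⊕ Fin b) → ℝ, S * Matrix.diagonal d * Sᵀ
      = rpowMat V (1/2) * (U * Matrix.diagonal d * star U) * rpowMat V (1/2) := by
    intro d
    rw [hSdef, hSt]
    simp only [Matrix.mul_assoc]
  have hG : ∀ s : ℝ, wGeomMean V W s = S * Matrix.diagonal (fun i => μ i ^ s) * Sᵀ := by
    intro s
    unfold wGeomMean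
    rw [← hCdef, rpowMat_eq hC.1 s, hSd]
  have hSV : S * Sᵀ = V := by
    calc S * Sᵀ = rpowMat V (1/2) * (U * star U) * rpowMat V (1/2) := by
          rw [hSdef, hSt]; simp only [Matrix.mul_assoc]
      _ = V := by rw [hUU, Matrix.mul_one, h1]
  have hSW : S * Matrix.diagonal μ * Sᵀ = W := by
    have hspecC : U * Matrix.diagonal μ * star U = C := by
      have h4 := hC.1.spectral_theorem
      rw [RCLike.ofReal_real_eq_id, Function.id_comp] at h4
      exact h4.symm
    rw [hSd μ, hspecC, hCdef]
    calc rpowMat V (1/2) * (rpowMat V (-(1/2)) * W * rpowMat V (-(1/2))) * rpowMat V (1/2)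
        = (rpowMat V (1/2) * rpowMat V (-(1/2))) * W
          * (rpowMat V (-(1/2)) * rpowMat V (1/2)) := by simp only [Matrix.mul_assoc]
      _ = W := by rw [h0, h0', Matrix.one_mul, Matrix.mul_one]
  have hSdet : ∀ x : (Fin a ⊕ Fin b) → ℝ, x ≠ 0 → Sᵀ *ᵥ x ≠ 0 := by
    have hdet : (Sᵀ).det ≠ 0 := by
      intro hzero
      have h5 : V.det = S.det * Sᵀ.det := by rw [← hSV, Matrix.det_mul]
      rw [hzero, mul_zero] at h5
      exact hV.det_pos.ne' h5
    intro x hx hx0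
    apply hx
    have h6 : ((Sᵀ)⁻¹ * Sᵀ) *ᵥ x = (Sᵀ)⁻¹ *ᵥ (Sᵀ *ᵥ x) := (Matrix.mulVec_mulVec _ _ _).symm
    rw [Matrix.nonsing_inv_mul _ (isUnit_iff_ne_zero.mpr hdet), Matrix.one_mulVec,
      hx0, Matrix.mulVec_zero] at h6
    exact h6
  have hpdfull : ∀ d : (Fin a ⊕ Fin b) → ℝ, (∀ i, 0 < d i)
      → (S * Matrix.diagonal d * Sᵀ).PosDef := by
    intro d hd
    have hdg : (Matrix.diagonal d).PosDef := Matrix.posDef_diagonal_iff.mpr hd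
    have h7 := posDef_conj hdg Sᵀ hSdet
    rwa [ctr, Matrix.transpose_transpose] at h7
  -- blocks
  set R₁ := S.submatrix Sum.inl id with hR₁
  set R₂ := S.submatrix Sum.inr id with hR₂
  have hblock₁ : ∀ d : (Fin a ⊕ Fin b) → ℝ,
      (S * Matrix.diagonal d * Sᵀ).toBlocks₁₁ = R₁ * Matrix.diagonal d * R₁ᵀ := by
    intro d
    ext i j
    show (S * Matrix.diagonal d * Sᵀ) (Sum.inl i) (Sum.inl j) = _
    rw [mul_diag_mul_t_apply, mul_diag_mul_t_apply]
    rfl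
  have hblock₂ : ∀ d : (Fin a ⊕ Fin b) → ℝ,
      (S * Matrix.diagonal d * Sᵀ).toBlocks₂₂ = R₂ * Matrix.diagonal d * R₂ᵀ := by
    intro d
    ext i j
    show (S * Matrix.diagonal d * Sᵀ) (Sum.inr i) (Sum.inr j) = _
    rw [mul_diag_mul_t_apply, mul_diag_mul_t_apply]
    rfl
  have hpd₁ : ∀ d : (Fin a ⊕ Fin b) → ℝ, (∀ i, 0 < d i)
      → (R₁ * Matrix.diagonal d * R₁ᵀ).PosDef := by
    intro d hd
    rw [← hblock₁]
    exact posDef_submatrix (hpdfull d hd) Sum.inl Sum.inl_injective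
  have hpd₂ : ∀ d : (Fin a ⊕ Fin b) → ℝ, (∀ i, 0 < d i)
      → (R₂ * Matrix.diagonal d * R₂ᵀ).PosDef := by
    intro d hd
    rw [← hblock₂]
    exact posDef_submatrix (hpdfull d hd) Sum.inr Sum.inr_injective
  -- diagonal simplifications
  have hd0 : Matrix.diagonal (fun i : Fin a ⊕ Fin b => μ i ^ (0:ℝ)) = 1 := by
    rw [show (fun i : Fin a ⊕ Fin b => μ i ^ (0:ℝ)) = fun _ => (1:ℝ) from
      funext fun i => Real.rpow_zero _]
    exact Matrix.diagonal_one
  have hd1 : (fun i : Fin a ⊕ Fin b => μ i ^ (1:ℝ)) = μ :=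
    funext fun i => Real.rpow_one _
  -- identify blocks of V, W, G
  have hVfull : S * Matrix.diagonal (fun i => μ i ^ (0:ℝ)) * Sᵀ = V := by
    rw [hd0, Matrix.mul_one, hSV]
  have hWfull : S * Matrix.diagonal (fun i => μ i ^ (1:ℝ)) * Sᵀ = W := by
    rw [hd1, hSW]
  -- positivity of all dets
  have hGpd : (wGeomMean V W t).PosDef := by
    rw [hG t]
    exact hpdfull _ (fun i => Real.rpow_pos_of_pos (hμ i) t)
  have hVA : V.toBlocks₁₁.PosDef := posDef_submatrix hV Sum.inl Sum.inl_injective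
  have hVB : V.toBlocks₂₂.PosDef := posDef_submatrix hV Sum.inr Sum.inr_injective
  have hWA : W.toBlocks₁₁.PosDef := posDef_submatrix hW Sum.inl Sum.inl_injective
  have hWB : W.toBlocks₂₂.PosDef := posDef_submatrix hW Sum.inr Sum.inr_injective
  have hGA : (wGeomMean V W t).toBlocks₁₁.PosDef :=
    posDef_submatrix hGpd Sum.inl Sum.inl_injective
  have hGB : (wGeomMean V W t).toBlocks₂₂.PosDef :=
    posDef_submatrix hGpd Sum.inr Sum.inr_injective
  -- key inequalities for blocks
  have key₁ : Real.log (wGeomMean V W t).toBlocks₁₁.det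
      ≤ (1 - t) * Real.log V.toBlocks₁₁.det + t * Real.log W.toBlocks₁₁.det := by
    have h8 := log_det_rpow_diag_le R₁ μ hμ hpd₁ ht
    rwa [← hblock₁, ← hblock₁, ← hblock₁, hVfull, hWfull, ← hG t] at h8
  have key₂ : Real.log (wGeomMean V W t).toBlocks₂₂.det
      ≤ (1 - t) * Real.log V.toBlocks₂₂.det + t * Real.log W.toBlocks₂₂.det := by
    have h8 := log_det_rpow_diag_le R₂ μ hμ hpd₂ ht
    rwa [← hblock₂, ← hblock₂, ← hblock₂, hVfull, hWfull, ← hG t] at h8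
  -- full determinant: exact linearity
  have hdetSS : S.det * Sᵀ.det = V.det := by rw [← Matrix.det_mul, hSV]
  have hlogdet : ∀ s : ℝ, Real.log (S * Matrix.diagonal (fun i => μ i ^ s) * Sᵀ).det
      = Real.log V.det + s * ∑ i, Real.log (μ i) := by
    intro s
    rw [Matrix.det_mul, Matrix.det_mul, Matrix.det_diagonal]
    have hprod : (∏ i, μ i ^ s) = ∏ i, μ i ^ s := rfl
    have hprodpos : (0:ℝ) < ∏ i, μ i ^ s :=
      Finset.prod_pos fun i _ => Real.rpow_pos_of_pos (hμ i) s
    have hSdetne : S.det * Sᵀ.det ≠ 0 := by rw [hdetSS]; exact hV.det_pos.ne'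
    calc Real.log (S.det * (∏ i, μ i ^ s) * Sᵀ.det)
        = Real.log ((S.det * Sᵀ.det) * ∏ i, μ i ^ s) := by ring_nf
      _ = Real.log (S.det * Sᵀ.det) + Real.log (∏ i, μ i ^ s) :=
          Real.log_mul hSdetne hprodpos.ne'
      _ = Real.log V.det + s * ∑ i, Real.log (μ i) := by
          rw [hdetSS, Real.log_prod (fun i _ => (Real.rpow_pos_of_pos (hμ i) s).ne')]
          congr 1
          rw [Finset.mul_sum]
          exact Finset.sum_congr rfl fun i _ => Real.log_rpow (hμ i) s
  have hlogW : Real.log W.det = Real.log V.det + ∑ i, Real.log (μ i) := by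
    have h9 := hlogdet 1
    rw [hWfull] at h9
    simpa using h9
  have hlogG : Real.log (wGeomMean V W t).det
      = (1 - t) * Real.log V.det + t * Real.log W.det := by
    have h9 := hlogdet t
    rw [← hG t] at h9
    rw [h9, hlogW]
    ring
  -- assemble
  rw [IM_eq _ hGA.det_pos hGB.det_pos hGpd.det_pos,
    IM_eq _ hVA.det_pos hVB.det_pos hV.det_pos,
    IM_eq _ hWA.det_pos hWB.det_pos hW.det_pos]
  nlinarith [key₁, key₂, hlogG]
end

section
/- Let V_AB = [[A, X], [Xᵀ, B]] be real symmetric positive definite. Then the log-det mutual information satisfies I_M(A:B)_V ≥ ½ Tr[A^{-1} X B^{-1} Xᵀ]; the right-hand side equals ½ ‖A^{-1/2} X B^{-1/2}‖₂², half the squared Frobenius norm. -/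
open Matrix

section Helpers

variable {ι : Type} [Fintype ι] [DecidableEq ι]

lemma rpowMat_eq {M : Matrix ι ι ℝ} (h : M.IsHermitian) (t : ℝ) :
    rpowMat M t = (h.eigenvectorUnitary : Matrix ι ι ℝ) *
      Matrix.diagonal (fun i => h.eigenvalues i ^ t) *
      star (h.eigenvectorUnitary : Matrix ι ι ℝ) := by
  rw [rpowMat, dif_pos h]

lemma rpowMat_mul {M : Matrix ι ι ℝ} (hM : M.PosDef) (s t : ℝ) :
    rpowMat M s * rpowMat M t = rpowMat M (s + t) := by
  have h := hM.1
  set U : Matrix ι ι ℝ := (h.eigenvectorUnitary : Matrix ι ι ℝ) with hUdef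
  have hU : star U * U = 1 := mem_unitaryGroup_iff'.mp h.eigenvectorUnitary.2
  have key : ∀ P Q : Matrix ι ι ℝ, (U*P*star U) * (U*Q*star U) = U*(P*Q)*star U := by
    intro P Q
    rw [Matrix.mul_assoc (U*P) (star U) (U*Q*star U), ← Matrix.mul_assoc (star U) (U*Q) (star U),
      ← Matrix.mul_assoc (star U) U Q, hU, Matrix.one_mul, ← Matrix.mul_assoc,
      Matrix.mul_assoc U P Q]
  have hd : (fun i => h.eigenvalues i ^ s * h.eigenvalues i ^ t)
      = (fun i => h.eigenvalues i ^ (s+t)) := by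
    funext i; exact (Real.rpow_add (hM.eigenvalues_pos i) s t).symm
  rw [rpowMat_eq h, rpowMat_eq h, rpowMat_eq h, key, diagonal_mul_diagonal, hd]

lemma rpowMat_one {M : Matrix ι ι ℝ} (h : M.IsHermitian) : rpowMat M 1 = M := by
  rw [rpowMat_eq h]
  conv_rhs => rw [h.spectral_theorem]
  congr 2
  funext i
  simp [Real.rpow_one]

lemma rpowMat_zero {M : Matrix ι ι ℝ} (h : M.IsHermitian) : rpowMat M 0 = 1 := by
  rw [rpowMat_eq h]
  have : Matrix.diagonal (fun i => h.eigenvalues i ^ (0:ℝ)) = (1 : Matrix ι ι ℝ) := by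
    simp [Real.rpow_zero]
  rw [this, Matrix.mul_one, mem_unitaryGroup_iff.mp h.eigenvectorUnitary.2]

lemma rpowMat_isHermitian {M : Matrix ι ι ℝ} (h : M.IsHermitian) (t : ℝ) :
    (rpowMat M t).IsHermitian := by
  rw [rpowMat_eq h]
  unfold Matrix.IsHermitian
  simp [conjTranspose_mul, Matrix.mul_assoc, star_eq_conjTranspose, diagonal_conjTranspose]

lemma rpowMat_transpose {M : Matrix ι ι ℝ} (h : M.IsHermitian) (t : ℝ) :
    (rpowMat M t)ᵀ = rpowMat M t := by
  rw [← conjTranspose_eq_transpose_of_trivial]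
  exact rpowMat_isHermitian h t

lemma trace_eq_sum_eigen {M : Matrix ι ι ℝ} (h : M.IsHermitian) :
    M.trace = ∑ i, h.eigenvalues i := by
  have hU : star (h.eigenvectorUnitary : Matrix ι ι ℝ) * (h.eigenvectorUnitary : Matrix ι ι ℝ) = 1 :=
    mem_unitaryGroup_iff'.mp h.eigenvectorUnitary.2
  conv_lhs => rw [h.spectral_theorem]
  rw [Unitary.conjStarAlgAut_apply, Matrix.trace_mul_comm, ← Matrix.mul_assoc, hU, Matrix.one_mul, trace_diagonal]
  simp

lemma rpowMat_half_mul {M : Matrix ι ι ℝ} (hM : M.PosDef) :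
    rpowMat M (-(1/2)) * rpowMat M (-(1/2)) = M⁻¹ := by
  rw [rpowMat_mul hM]
  norm_num
  have h1 : M * rpowMat M (-1) = 1 := by
    nth_rewrite 1 [← rpowMat_one hM.1]
    rw [rpowMat_mul hM]
    norm_num
    exact rpowMat_zero hM.1
  exact (Matrix.inv_eq_right_inv h1).symm

lemma posDef_conj {N R : Matrix ι ι ℝ} (hN : N.PosDef) (hR : R.IsHermitian) (hU : IsUnit R) :
    (R * N * R).PosDef := by
  have hRt : Rᵀ = R := by rw [← conjTranspose_eq_transpose_of_trivial]; exact hR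
  refine Matrix.PosDef.of_dotProduct_mulVec_pos ?_ ?_
  · show (R * N * R)ᴴ = R * N * R
    rw [conjTranspose_mul, conjTranspose_mul, hR.eq, hN.1.eq, Matrix.mul_assoc]
  · intro x hx
    have hinj := Matrix.mulVec_injective_iff_isUnit.mpr hU
    have hRx : R *ᵥ x ≠ 0 := by
      intro hc
      exact hx (hinj (by simpa using hc))
    have hpos := hN.dotProduct_mulVec_pos hRx
    have hsx : ∀ y : ι → ℝ, star y = y := fun y => funext fun i => star_trivial _
    rw [hsx] at hpos ⊢
    calc (0:ℝ) < (R *ᵥ x) ⬝ᵥ N *ᵥ (R *ᵥ x) := hpos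
    _ = x ⬝ᵥ (R * N * R) *ᵥ x := by
        rw [← mulVec_mulVec, ← mulVec_mulVec, dotProduct_mulVec x,
          ← Matrix.mulVec_transpose, hRt, dotProduct_mulVec (R *ᵥ x)]

end Helpers

/-- **Quadratic lower bound on the log-det mutual information.** For a positive definite
`V_AB = [[A, X], [Xᵀ, B]]`, `I_M(A:B)_V ≥ ½ Tr[A⁻¹ X B⁻¹ Xᵀ]`, and the right-hand side
equals `½ ‖A^{-1/2} X B^{-1/2}‖₂²`, half the squared Frobenius norm. -/
theorem IM_ge_half_trace (a b : ℕ)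
    (A : Matrix (Fin a) (Fin a) ℝ) (B : Matrix (Fin b) (Fin b) ℝ)
    (X : Matrix (Fin a) (Fin b) ℝ)
    (hV : (fromBlocks A X Xᵀ B).PosDef) :
    (1 / 2 : ℝ) * Real.log ((A.det * B.det) / (fromBlocks A X Xᵀ B).det)
        ≥ (1 / 2 : ℝ) * Matrix.trace (A⁻¹ * X * B⁻¹ * Xᵀ)
      ∧ Matrix.trace (A⁻¹ * X * B⁻¹ * Xᵀ)
        = Matrix.trace ((rpowMat A (-(1 / 2)) * X * rpowMat B (-(1 / 2))) *
            (rpowMat A (-(1 / 2)) * X * rpowMat B (-(1 / 2)))ᵀ) := by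
  have hXc : Xᴴ = Xᵀ := conjTranspose_eq_transpose_of_trivial X
  have hA : A.PosDef := by
    refine Matrix.PosDef.of_dotProduct_mulVec_pos ?_ ?_
    · have h1 := congrArg Matrix.toBlocks₁₁ hV.1
      rwa [fromBlocks_conjTranspose, toBlocks_fromBlocks₁₁, toBlocks_fromBlocks₁₁] at h1
    · intro x hx
      have hne : (Sum.elim x (0 : Fin b → ℝ)) ≠ 0 := by
        intro hc; exact hx (funext fun i => congrFun hc (Sum.inl i))
      have := hV.dotProduct_mulVec_pos hne
      simpa [fromBlocks_mulVec, Function.star_sumElim, sumElim_dotProduct_sumElim] using this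
  have hB : B.PosDef := by
    refine Matrix.PosDef.of_dotProduct_mulVec_pos ?_ ?_
    · have h1 := congrArg Matrix.toBlocks₂₂ hV.1
      rwa [fromBlocks_conjTranspose, toBlocks_fromBlocks₂₂, toBlocks_fromBlocks₂₂] at h1
    · intro x hx
      have hne : (Sum.elim (0 : Fin a → ℝ) x) ≠ 0 := by
        intro hc; exact hx (funext fun i => congrFun hc (Sum.inr i))
      have := hV.dotProduct_mulVec_pos hne
      simpa [fromBlocks_mulVec, Function.star_sumElim, sumElim_dotProduct_sumElim] using this
  letI := hA.isUnit.invertible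
  have hN : (B - Xᵀ * A⁻¹ * X).PosDef := by
    refine Matrix.PosDef.of_dotProduct_mulVec_pos ?_ ?_
    · have h1 : ((Xᵀ * A⁻¹ * X)ᴴ : Matrix (Fin b) (Fin b) ℝ) = Xᵀ * A⁻¹ * X := by
        rw [conjTranspose_mul, conjTranspose_mul, hXc, hA.1.inv.eq,
          conjTranspose_eq_transpose_of_trivial, transpose_transpose, Matrix.mul_assoc]
      exact hB.1.sub h1
    · intro x hx
      have key := schur_complement_eq₁₁ (A := A) X B (-((A⁻¹ * X) *ᵥ x)) x hA.1
      rw [hXc] at key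
      have hne : (Sum.elim (-((A⁻¹ * X) *ᵥ x)) x) ≠ 0 := by
        intro hc; exact hx (funext fun i => congrFun hc (Sum.inr i))
      have hpos := hV.dotProduct_mulVec_pos hne
      rw [dotProduct_mulVec, key, neg_add_cancel] at hpos
      simp only [star_zero, zero_vecMul, zero_dotProduct, zero_add] at hpos
      rwa [dotProduct_mulVec]
  -- rpow facts
  have hRAH : (rpowMat A (-(1/2))).IsHermitian := rpowMat_isHermitian hA.1 _
  have hRBH : (rpowMat B (-(1/2))).IsHermitian := rpowMat_isHermitian hB.1 _
  have hRAt : (rpowMat A (-(1/2)))ᵀ = rpowMat A (-(1/2)) := rpowMat_transpose hA.1 _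
  have hRBt : (rpowMat B (-(1/2)))ᵀ = rpowMat B (-(1/2)) := rpowMat_transpose hB.1 _
  have hRA2 : rpowMat A (-(1/2)) * rpowMat A (-(1/2)) = A⁻¹ := rpowMat_half_mul hA
  have hRB2 : rpowMat B (-(1/2)) * rpowMat B (-(1/2)) = B⁻¹ := rpowMat_half_mul hB
  have hRBunit : IsUnit (rpowMat B (-(1/2))) := by
    have h1 : rpowMat B (-(1/2)) * (rpowMat B (-(1/2)) * B) = 1 := by
      rw [← Matrix.mul_assoc, hRB2, Matrix.nonsing_inv_mul B hB.det_pos.ne'.isUnit]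
    exact (Matrix.isUnit_iff_isUnit_det _).mpr (Matrix.isUnit_det_of_right_inverse h1)
  have hBRB : rpowMat B (-(1/2)) * B * rpowMat B (-(1/2)) = 1 := by
    nth_rewrite 2 [← rpowMat_one hB.1]
    rw [rpowMat_mul hB, rpowMat_mul hB]
    norm_num
    exact rpowMat_zero hB.1
  set RA := rpowMat A (-(1/2)) with hRAdef
  set RB := rpowMat B (-(1/2)) with hRBdef
  set Mm := RA * X * RB with hMmdef
  have hD_eq : (1 : Matrix (Fin b) (Fin b) ℝ) - Mmᵀ * Mm
      = RB * (B - Xᵀ * A⁻¹ * X) * RB := by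
    rw [Matrix.mul_sub, Matrix.sub_mul, hBRB]
    congr 1
    rw [hMmdef, transpose_mul, transpose_mul, hRAt, hRBt, ← hRA2]
    simp only [Matrix.mul_assoc]
  have hDpos : ((1 : Matrix (Fin b) (Fin b) ℝ) - Mmᵀ * Mm).PosDef := by
    rw [hD_eq]; exact posDef_conj hN hRBH hRBunit
  -- determinants
  have hdetV : (fromBlocks A X Xᵀ B).det = A.det * (B - Xᵀ * A⁻¹ * X).det := by
    rw [det_fromBlocks₁₁, invOf_eq_nonsing_inv]
  have hdetRB : RB.det * RB.det = B.det⁻¹ := by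
    rw [← Matrix.det_mul, hRB2]
    simp [Matrix.det_nonsing_inv]
  have hdetD : ((1 : Matrix (Fin b) (Fin b) ℝ) - Mmᵀ * Mm).det
      = B.det⁻¹ * (B - Xᵀ * A⁻¹ * X).det := by
    rw [hD_eq, Matrix.det_mul, Matrix.det_mul, ← hdetRB]
    ring
  have hratio : A.det * B.det / (fromBlocks A X Xᵀ B).det
      = (((1 : Matrix (Fin b) (Fin b) ℝ) - Mmᵀ * Mm).det)⁻¹ := by
    rw [hdetV, hdetD]
    have h1 := hA.det_pos.ne'
    have h2 := hB.det_pos.ne'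
    have h3 := hN.det_pos.ne'
    have key : ∀ dA dB dN : ℝ, dA ≠ 0 → dB ≠ 0 → dN ≠ 0 →
        dA * dB / (dA * dN) = (dB⁻¹ * dN)⁻¹ := by
      intro dA dB dN hdA hdB hdN
      field_simp
    exact key _ _ _ h1 h2 h3
  -- trace identity (second part of the goal)
  have h1 : Mm * Mmᵀ = RA * (X * (B⁻¹ * (Xᵀ * RA))) := by
    rw [hMmdef, transpose_mul, transpose_mul, hRAt, hRBt, ← hRB2]
    simp only [Matrix.mul_assoc]
  have h2 : (X * (B⁻¹ * (Xᵀ * RA))) * RA = X * B⁻¹ * Xᵀ * A⁻¹ := by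
    rw [← hRA2]; simp only [Matrix.mul_assoc]
  have htrace2 : Matrix.trace (A⁻¹ * X * B⁻¹ * Xᵀ) = Matrix.trace (Mm * Mmᵀ) := by
    calc Matrix.trace (A⁻¹ * X * B⁻¹ * Xᵀ)
        = Matrix.trace (A⁻¹ * (X * B⁻¹ * Xᵀ)) := by rw [Matrix.mul_assoc, Matrix.mul_assoc,
          Matrix.mul_assoc]
      _ = Matrix.trace ((X * B⁻¹ * Xᵀ) * A⁻¹) := Matrix.trace_mul_comm _ _
      _ = Matrix.trace ((X * (B⁻¹ * (Xᵀ * RA))) * RA) := by rw [h2]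
      _ = Matrix.trace (RA * (X * (B⁻¹ * (Xᵀ * RA)))) := Matrix.trace_mul_comm _ _
      _ = Matrix.trace (Mm * Mmᵀ) := by rw [h1]
  -- eigenvalue inequality
  have hher := hDpos.1
  have hν : ∀ i, 0 < hher.eigenvalues i := fun i => hDpos.eigenvalues_pos i
  have hdetprod : ((1 : Matrix (Fin b) (Fin b) ℝ) - Mmᵀ * Mm).det = ∏ i, hher.eigenvalues i := by
    simpa using hher.det_eq_prod_eigenvalues
  have htr : ((1 : Matrix (Fin b) (Fin b) ℝ) - Mmᵀ * Mm).trace = ∑ i, hher.eigenvalues i :=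
    trace_eq_sum_eigen hher
  have hlog : Real.log (A.det * B.det / (fromBlocks A X Xᵀ B).det)
      = - ∑ i, Real.log (hher.eigenvalues i) := by
    rw [hratio, Real.log_inv, hdetprod, Real.log_prod]
    exact fun i _ => (hν i).ne'
  have htrC : Matrix.trace (A⁻¹ * X * B⁻¹ * Xᵀ) = ∑ i, (1 - hher.eigenvalues i) := by
    have ht1 : ((1 : Matrix (Fin b) (Fin b) ℝ) - Mmᵀ * Mm).trace
        = (b : ℝ) - Matrix.trace (Mmᵀ * Mm) := by
      rw [Matrix.trace_sub, Matrix.trace_one]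
      simp
    have ht2 : Matrix.trace (Mmᵀ * Mm) = (b : ℝ) - ∑ i, hher.eigenvalues i := by
      rw [← htr, ht1]; ring
    rw [htrace2, Matrix.trace_mul_comm, ht2, Finset.sum_sub_distrib]
    simp [Finset.card_univ]
  have key : Matrix.trace (A⁻¹ * X * B⁻¹ * Xᵀ)
      ≤ Real.log (A.det * B.det / (fromBlocks A X Xᵀ B).det) := by
    rw [hlog, htrC]
    have hle : ∀ i ∈ Finset.univ, (1 : ℝ) - hher.eigenvalues i ≤ - Real.log (hher.eigenvalues i) := by
      intro i _
      have := Real.log_le_sub_one_of_pos (hν i)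
      linarith
    calc ∑ i, (1 - hher.eigenvalues i) ≤ ∑ i, - Real.log (hher.eigenvalues i) :=
          Finset.sum_le_sum hle
      _ = - ∑ i, Real.log (hher.eigenvalues i) := by rw [Finset.sum_neg_distrib]
  refine ⟨?_, htrace2⟩
  have := mul_le_mul_of_nonneg_left key (by norm_num : (0:ℝ) ≤ 1/2)
  linarith
end

section
/- Let V_ABC = [[A, X, Y], [Xᵀ, B, Z], [Yᵀ, Zᵀ, C]] be real symmetric positive definite, and set Δ := X − Y C^{-1} Zᵀ. Then the following chain of inequalities holds: I_M(A:B|C)_V ≥ ½ Tr[(V_AC/V_C)^{-1} Δ (V_BC/V_C)^{-1} Δᵀ] ≥ ½ Tr[A^{-1} Δ B^{-1} Δᵀ], where the last quantity equals ½ ‖A^{-1/2} Δ B^{-1/2}‖₂² (half the squared Frobenius norm). In particular the lower bound is faithful: it vanishes exactly when X = Y C^{-1} Zᵀ. -/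
open Matrix
variable {n : Type*} [Fintype n] [DecidableEq n]

open scoped MatrixOrder in
noncomputable def Matrix.PosSemidef.sqrt {M : Matrix n n ℝ} (_hM : M.PosSemidef) :
    Matrix n n ℝ :=
  CFC.sqrt M

open scoped MatrixOrder in
lemma Matrix.PosSemidef.sqrt_mul_self {M : Matrix n n ℝ} (hM : M.PosSemidef) :
    hM.sqrt * hM.sqrt = M :=
  CFC.sqrt_mul_sqrt_self M hM.nonneg

open scoped MatrixOrder in
lemma Matrix.PosSemidef.posSemidef_sqrt {M : Matrix n n ℝ} (hM : M.PosSemidef) :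
    hM.sqrt.PosSemidef :=
  (CFC.sqrt_nonneg M).posSemidef

lemma aux_trace_eq_sum_eigenvalues {M : Matrix n n ℝ} (hM : M.IsHermitian) :
    M.trace = ∑ i, hM.eigenvalues i := by
  conv_lhs => rw [hM.spectral_theorem, Unitary.conjStarAlgAut_apply]
  rw [Matrix.trace_mul_comm, ← Matrix.mul_assoc]
  have h1 : (star hM.eigenvectorUnitary : Matrix n n ℝ) * hM.eigenvectorUnitary = 1 :=
    (Unitary.mem_iff.mp hM.eigenvectorUnitary.2).1
  rw [h1, Matrix.one_mul, Matrix.trace_diagonal]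
  simp

lemma aux_logdet_le {M : Matrix n n ℝ} (hM : M.PosDef) :
    Real.log M.det ≤ M.trace - (Fintype.card n : ℝ) := by
  rw [hM.isHermitian.det_eq_prod_eigenvalues, aux_trace_eq_sum_eigenvalues hM.isHermitian]
  simp only [RCLike.ofReal_real_eq_id, id_eq]
  have hpos : ∀ i ∈ Finset.univ, (hM.isHermitian.eigenvalues i : ℝ) ≠ 0 :=
    fun i _ => (hM.eigenvalues_pos i).ne'
  rw [Real.log_prod hpos]
  have : ∀ i ∈ Finset.univ, Real.log (hM.isHermitian.eigenvalues i)
      ≤ hM.isHermitian.eigenvalues i - 1 :=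
    fun i _ => Real.log_le_sub_one_of_pos (hM.eigenvalues_pos i)
  calc ∑ i, Real.log (hM.isHermitian.eigenvalues i)
      ≤ ∑ i, (hM.isHermitian.eigenvalues i - 1) := Finset.sum_le_sum this
    _ = ∑ i, hM.isHermitian.eigenvalues i - Fintype.card n := by
        rw [Finset.sum_sub_distrib]; simp

lemma aux_conj_posdef {M R : Matrix n n ℝ} (hM : M.PosDef) (hR : IsUnit R.det) :
    (R * M * Rᴴ).PosDef := by
  refine Matrix.PosDef.of_dotProduct_mulVec_pos ?_ fun x hx => ?_
  · have := hM.isHermitian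
    unfold Matrix.IsHermitian at *
    rw [conjTranspose_mul, conjTranspose_mul, conjTranspose_conjTranspose, this,
      Matrix.mul_assoc]
  · have hx' : Rᴴ *ᵥ x ≠ 0 := by
      have : Function.Injective (Rᴴ.mulVec) := by
        rw [Matrix.mulVec_injective_iff_isUnit]
        exact (Matrix.isUnit_iff_isUnit_det _).mpr (by simpa using hR)
      intro h
      exact hx (this (by simpa using h))
    have := hM.dotProduct_mulVec_pos hx'
    rw [star_mulVec, conjTranspose_conjTranspose, ← Matrix.dotProduct_mulVec,
      Matrix.mulVec_mulVec] at this
    rw [← Matrix.mulVec_mulVec]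
    exact this

lemma aux_sqrt_det_isUnit {M : Matrix n n ℝ} (hM : M.PosDef) :
    IsUnit hM.posSemidef.sqrt.det := by
  have h2 : hM.posSemidef.sqrt.det * hM.posSemidef.sqrt.det = M.det := by
    rw [← Matrix.det_mul, hM.posSemidef.sqrt_mul_self]
  have h3 := hM.det_pos
  refine isUnit_iff_ne_zero.mpr fun h => ?_
  rw [h, mul_zero] at h2
  exact h3.ne (h2)

lemma aux_sqrt_herm {M : Matrix n n ℝ} (hM : M.PosDef) :
    (hM.posSemidef.sqrt)ᴴ = hM.posSemidef.sqrt :=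
  hM.posSemidef.posSemidef_sqrt.isHermitian

lemma aux_trace_psd_nonneg {M : Matrix n n ℝ} (hM : M.PosSemidef) : 0 ≤ M.trace := by
  rw [aux_trace_eq_sum_eigenvalues hM.isHermitian]
  exact Finset.sum_nonneg fun i _ => hM.eigenvalues_nonneg i

lemma aux_trace_mul_psd_nonneg {P Q : Matrix n n ℝ} (hP : P.PosSemidef)
    (hQ : Q.PosSemidef) : 0 ≤ (P * Q).trace := by
  set R := hP.sqrt with hRdef
  have hRR : R * R = P := hP.sqrt_mul_self
  have hRH : Rᴴ = R := hP.posSemidef_sqrt.isHermitian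
  have key : (P * Q).trace = (R * Q * Rᴴ).trace := by
    rw [hRH, ← hRR, Matrix.mul_assoc, Matrix.trace_mul_comm, Matrix.mul_assoc]
  rw [key]
  exact aux_trace_psd_nonneg (hQ.mul_mul_conjTranspose_same R)

lemma aux_sqrt_inv_conj {M : Matrix n n ℝ} (hM : M.PosDef) :
    hM.inv.posSemidef.sqrt * M * hM.inv.posSemidef.sqrt = 1 := by
  set R := hM.inv.posSemidef.sqrt with hRdef
  have hRR : R * R = M⁻¹ := hM.inv.posSemidef.sqrt_mul_self
  have hRdet : IsUnit R.det := aux_sqrt_det_isUnit hM.inv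
  have hMeq : M = R⁻¹ * R⁻¹ := by
    rw [← Matrix.mul_inv_rev, hRR, Matrix.nonsing_inv_nonsing_inv _ hM.det_pos.ne'.isUnit]
  rw [hMeq, show R * (R⁻¹ * R⁻¹) * R = (R * R⁻¹) * (R⁻¹ * R) by
    simp only [Matrix.mul_assoc], Matrix.mul_nonsing_inv _ hRdet,
    Matrix.nonsing_inv_mul _ hRdet, Matrix.one_mul]

lemma aux_inv_sub_one_psd {P : Matrix n n ℝ} (hP : P.PosDef)
    (h1P : (1 - P).PosSemidef) : (P⁻¹ - 1).PosSemidef := by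
  set Q := hP.inv.posSemidef.sqrt with hQdef
  have hQQ : Q * Q = P⁻¹ := hP.inv.posSemidef.sqrt_mul_self
  have hQH : Qᴴ = Q := aux_sqrt_herm hP.inv
  have hQPQ : Q * P * Q = 1 := aux_sqrt_inv_conj hP
  have hkey1 : P⁻¹ - 1 = Q * (1 - P) * Qᴴ := by
    rw [hQH, Matrix.mul_sub, Matrix.sub_mul, Matrix.mul_one, hQQ, hQPQ]
  rw [hkey1]
  exact h1P.mul_mul_conjTranspose_same Q

lemma aux_inv_antitone {M N : Matrix n n ℝ} (hM : M.PosDef) (hN : N.PosDef)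
    (h : (N - M).PosSemidef) : (M⁻¹ - N⁻¹).PosSemidef := by
  set R := hN.inv.posSemidef.sqrt with hRdef
  have hRR : R * R = N⁻¹ := hN.inv.posSemidef.sqrt_mul_self
  have hRH : Rᴴ = R := aux_sqrt_herm hN.inv
  have hRdet : IsUnit R.det := aux_sqrt_det_isUnit hN.inv
  have hRNR : R * N * R = 1 := aux_sqrt_inv_conj hN
  have hP : (R * M * R).PosDef := by
    have := aux_conj_posdef hM hRdet
    rwa [hRH] at this
  have h1P : (1 - R * M * R).PosSemidef := by
    have h2 : R * (N - M) * Rᴴ = 1 - R * M * R := by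
      rw [hRH, Matrix.mul_sub, Matrix.sub_mul, hRNR]
    rw [← h2]
    exact h.mul_mul_conjTranspose_same R
  have hpsd := aux_inv_sub_one_psd hP h1P
  have hRPinvR : R * (R * M * R)⁻¹ * R = M⁻¹ := by
    rw [Matrix.mul_inv_rev, Matrix.mul_inv_rev]
    rw [show R * (R⁻¹ * (M⁻¹ * R⁻¹)) * R = R * R⁻¹ * M⁻¹ * (R⁻¹ * R) by
      simp only [Matrix.mul_assoc]]
    rw [Matrix.mul_nonsing_inv _ hRdet, Matrix.nonsing_inv_mul _ hRdet,
      Matrix.one_mul, Matrix.mul_one]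
  have hkey2 : M⁻¹ - N⁻¹ = R * ((R * M * R)⁻¹ - 1) * Rᴴ := by
    rw [hRH, Matrix.mul_sub, Matrix.sub_mul, Matrix.mul_one, hRR, hRPinvR]
  rw [hkey2]
  exact hpsd.mul_mul_conjTranspose_same R

section blocks
variable {m : Type*} [Fintype m] [DecidableEq m]

lemma aux_blocks_posdef {A : Matrix m m ℝ} {B : Matrix m n ℝ} {C : Matrix n m ℝ}
    {D : Matrix n n ℝ} (h : (fromBlocks A B C D).PosDef) : A.PosDef ∧ D.PosDef := by
  have h1 := h.isHermitian
  have h2 := fun (x : m ⊕ n → ℝ) (hx : x ≠ 0) => h.dotProduct_mulVec_pos hx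
  rw [isHermitian_fromBlocks_iff] at h1
  constructor
  · refine Matrix.PosDef.of_dotProduct_mulVec_pos h1.1 fun x hx => ?_
    have hne : (Sum.elim x (0 : n → ℝ)) ≠ 0 := fun hh => hx (by
      ext i; exact congrFun hh (Sum.inl i))
    have := h2 _ hne
    simpa [fromBlocks_mulVec, Function.star_sumElim, sumElim_dotProduct_sumElim] using this
  · refine Matrix.PosDef.of_dotProduct_mulVec_pos h1.2.2.2 fun x hx => ?_
    have hne : (Sum.elim (0 : m → ℝ) x) ≠ 0 := fun hh => hx (by
      ext i; exact congrFun hh (Sum.inr i))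
    have := h2 _ hne
    simpa [fromBlocks_mulVec, Function.star_sumElim, sumElim_dotProduct_sumElim] using this

lemma aux_schur22_posdef {A : Matrix m m ℝ} {B : Matrix m n ℝ} {D : Matrix n n ℝ}
    (h : (fromBlocks A B Bᴴ D).PosDef) (hD : D.PosDef) :
    (A - B * D⁻¹ * Bᴴ).PosDef := by
  haveI : Invertible D := D.invertibleOfIsUnitDet hD.det_pos.ne'.isUnit
  refine Matrix.PosDef.of_dotProduct_mulVec_pos ?_ fun x hx => ?_
  · exact ((Matrix.IsHermitian.fromBlocks₂₂ A B hD.isHermitian).mp h.isHermitian)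
  · set y := -((D⁻¹ * Bᴴ) *ᵥ x) with hy
    have hne : (Sum.elim x y) ≠ 0 := fun hh => hx (by
      ext i; exact congrFun hh (Sum.inl i))
    have h2 := h.dotProduct_mulVec_pos hne
    rw [Matrix.dotProduct_mulVec, schur_complement_eq₂₂ A B x y hD.isHermitian] at h2
    rw [hy] at h2
    simp only [add_neg_cancel, star_zero, zero_vecMul, zero_dotProduct, zero_add] at h2
    rwa [Matrix.dotProduct_mulVec]

lemma aux_schur11_posdef {A : Matrix m m ℝ} {B : Matrix m n ℝ} {D : Matrix n n ℝ}
    (h : (fromBlocks A B Bᴴ D).PosDef) (hA : A.PosDef) :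
    (D - Bᴴ * A⁻¹ * B).PosDef := by
  haveI : Invertible A := A.invertibleOfIsUnitDet hA.det_pos.ne'.isUnit
  refine Matrix.PosDef.of_dotProduct_mulVec_pos ?_ fun y hy => ?_
  · exact ((Matrix.IsHermitian.fromBlocks₁₁ B D hA.isHermitian).mp h.isHermitian)
  · set x := -((A⁻¹ * B) *ᵥ y) with hx
    have hne : (Sum.elim x y) ≠ 0 := fun hh => hy (by
      ext i; exact congrFun hh (Sum.inr i))
    have h2 := h.dotProduct_mulVec_pos hne
    rw [Matrix.dotProduct_mulVec, schur_complement_eq₁₁ B D x y hA.isHermitian] at h2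
    rw [hx] at h2
    simp only [neg_add_cancel, star_zero, zero_vecMul, zero_dotProduct, zero_add] at h2
    rwa [Matrix.dotProduct_mulVec]

end blocks

section core
variable {m : Type*} [Fintype m] [DecidableEq m]

lemma aux_logdet_ineq {P : Matrix m m ℝ} {Q : Matrix n n ℝ} {D : Matrix m n ℝ}
    (hP : P.PosDef) (hQ : Q.PosDef) (hS : (Q - Dᴴ * P⁻¹ * D).PosDef) :
    (P⁻¹ * D * Q⁻¹ * Dᴴ).trace ≤ Real.log Q.det - Real.log (Q - Dᴴ * P⁻¹ * D).det := by
  set S := Q - Dᴴ * P⁻¹ * D with hSdef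
  set R := hQ.inv.posSemidef.sqrt with hRdef
  have hRR : R * R = Q⁻¹ := hQ.inv.posSemidef.sqrt_mul_self
  have hRH : Rᴴ = R := aux_sqrt_herm hQ.inv
  have hRdet : IsUnit R.det := aux_sqrt_det_isUnit hQ.inv
  have hM : (R * S * R).PosDef := by
    have := aux_conj_posdef hS hRdet
    rwa [hRH] at this
  have h1 := aux_logdet_le hM
  have hdet : (R * S * R).det = S.det / Q.det := by
    rw [Matrix.det_mul, Matrix.det_mul]
    have : R.det * S.det * R.det = (R.det * R.det) * S.det := by ring
    rw [this, ← Matrix.det_mul, hRR, Matrix.det_nonsing_inv, Ring.inverse_eq_inv']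
    field_simp
  have htr : (R * S * R).trace = (Fintype.card n : ℝ) - (P⁻¹ * D * Q⁻¹ * Dᴴ).trace := by
    rw [Matrix.trace_mul_comm, show R * (R * S) = (R * R) * S by simp only [Matrix.mul_assoc],
      hRR, hSdef, Matrix.mul_sub, Matrix.nonsing_inv_mul _ hQ.det_pos.ne'.isUnit,
      Matrix.trace_sub, Matrix.trace_one]
    congr 1
    rw [show Q⁻¹ * (Dᴴ * P⁻¹ * D) = (Q⁻¹ * Dᴴ) * (P⁻¹ * D) by simp only [Matrix.mul_assoc],
      Matrix.trace_mul_comm,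
      show (P⁻¹ * D) * (Q⁻¹ * Dᴴ) = P⁻¹ * D * Q⁻¹ * Dᴴ by simp only [Matrix.mul_assoc]]
  rw [hdet, htr, Real.log_div hS.det_pos.ne' hQ.det_pos.ne'] at h1
  linarith

lemma aux_mono_ineq {P P' : Matrix m m ℝ} {Q Q' : Matrix n n ℝ} {D : Matrix m n ℝ}
    (hP : P.PosDef) (hP' : P'.PosDef) (hQ : Q.PosDef) (hQ' : Q'.PosDef)
    (h1 : (P - P').PosSemidef) (h2 : (Q - Q').PosSemidef) :
    (P⁻¹ * D * Q⁻¹ * Dᴴ).trace ≤ (P'⁻¹ * D * Q'⁻¹ * Dᴴ).trace := by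
  have k1 : (P'⁻¹ - P⁻¹).PosSemidef := aux_inv_antitone hP' hP h1
  have k2 : (Q'⁻¹ - Q⁻¹).PosSemidef := aux_inv_antitone hQ' hQ h2
  have t1 : 0 ≤ ((P'⁻¹ - P⁻¹) * (D * Q'⁻¹ * Dᴴ)).trace :=
    aux_trace_mul_psd_nonneg k1 (hQ'.inv.posSemidef.mul_mul_conjTranspose_same D)
  have t2 : 0 ≤ (P⁻¹ * (D * (Q'⁻¹ - Q⁻¹) * Dᴴ)).trace :=
    aux_trace_mul_psd_nonneg hP.inv.posSemidef (k2.mul_mul_conjTranspose_same D)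
  have key : P'⁻¹ * D * Q'⁻¹ * Dᴴ - P⁻¹ * D * Q⁻¹ * Dᴴ =
      (P'⁻¹ - P⁻¹) * (D * Q'⁻¹ * Dᴴ) + P⁻¹ * (D * (Q'⁻¹ - Q⁻¹) * Dᴴ) := by
    simp only [Matrix.sub_mul, Matrix.mul_sub, Matrix.mul_assoc]
    abel
  have := congrArg Matrix.trace key
  rw [Matrix.trace_sub, Matrix.trace_add] at this
  linarith

lemma aux_faithful {P : Matrix m m ℝ} {Q : Matrix n n ℝ} (hP : P.PosDef) (hQ : Q.PosDef)
    (D : Matrix m n ℝ) :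
    ((P⁻¹ * D * Q⁻¹ * Dᴴ).trace = 0 ↔ D = 0) := by
  set RA := hP.inv.posSemidef.sqrt with hRAdef
  set RB := hQ.inv.posSemidef.sqrt with hRBdef
  have hRA : RA * RA = P⁻¹ := hP.inv.posSemidef.sqrt_mul_self
  have hRB : RB * RB = Q⁻¹ := hQ.inv.posSemidef.sqrt_mul_self
  have hRAH : RAᴴ = RA := aux_sqrt_herm hP.inv
  have hRBH : RBᴴ = RB := aux_sqrt_herm hQ.inv
  have hRAdet : IsUnit RA.det := aux_sqrt_det_isUnit hP.inv
  have hRBdet : IsUnit RB.det := aux_sqrt_det_isUnit hQ.inv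
  set K := RA * D * RB with hKdef
  have e1 : K * Kᴴ = RA * (D * Q⁻¹ * Dᴴ * RA) := by
    rw [hKdef, Matrix.conjTranspose_mul, Matrix.conjTranspose_mul, hRAH, hRBH, ← hRB]
    simp only [Matrix.mul_assoc]
  have htr : (K * Kᴴ).trace = (P⁻¹ * D * Q⁻¹ * Dᴴ).trace := by
    calc (K * Kᴴ).trace = (RA * (D * Q⁻¹ * Dᴴ * RA)).trace := by rw [e1]
      _ = ((D * Q⁻¹ * Dᴴ * RA) * RA).trace := Matrix.trace_mul_comm _ _
      _ = ((D * Q⁻¹ * Dᴴ) * P⁻¹).trace := by rw [Matrix.mul_assoc (D * Q⁻¹ * Dᴴ), hRA]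
      _ = (P⁻¹ * (D * Q⁻¹ * Dᴴ)).trace := Matrix.trace_mul_comm _ _
      _ = (P⁻¹ * D * Q⁻¹ * Dᴴ).trace := by simp only [Matrix.mul_assoc]
  have hsq : (K * Kᴴ).trace = ∑ i, ∑ j, (K i j)^2 := by
    simp [Matrix.trace, Matrix.mul_apply, Matrix.diag, Matrix.conjTranspose_apply, sq]
  rw [← htr, hsq]
  constructor
  · intro h
    have hz : ∀ i ∈ Finset.univ, ∑ j, (K i j)^2 = 0 := by
      rw [← Finset.sum_eq_zero_iff_of_nonneg]
      · exact h
      · intro i _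
        exact Finset.sum_nonneg fun j _ => sq_nonneg _
    have hK : K = 0 := by
      ext i j
      have := (Finset.sum_eq_zero_iff_of_nonneg (fun j _ => sq_nonneg (K i j))).mp
        (hz i (Finset.mem_univ i)) j (Finset.mem_univ j)
      simpa using sq_eq_zero_iff.mp this
    have : D = RA⁻¹ * K * RB⁻¹ := by
      rw [hKdef, show RA⁻¹ * (RA * D * RB) * RB⁻¹ = (RA⁻¹ * RA) * D * (RB * RB⁻¹) by
        simp only [Matrix.mul_assoc], Matrix.nonsing_inv_mul _ hRAdet,
        Matrix.mul_nonsing_inv _ hRBdet, Matrix.one_mul, Matrix.mul_one]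
    rw [this, hK]
    simp
  · intro h
    simp [hKdef, h]

end core

lemma aux_fromBlocks_sub {l m p q : Type*} (A₁ A₂ : Matrix l p ℝ) (B₁ B₂ : Matrix l q ℝ)
    (C₁ C₂ : Matrix m p ℝ) (D₁ D₂ : Matrix m q ℝ) :
    fromBlocks A₁ B₁ C₁ D₁ - fromBlocks A₂ B₂ C₂ D₂ =
      fromBlocks (A₁ - A₂) (B₁ - B₂) (C₁ - C₂) (D₁ - D₂) := by
  ext (i | i) (j | j) <;> rfl

set_option maxHeartbeats 1000000 in
/-- **Faithful lower bound on the log-det conditional mutual information.**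
For positive definite `V = [[A, X, Y], [Xᵀ, B, Z], [Yᵀ, Zᵀ, C]]` and `Δ := X − Y C⁻¹ Zᵀ`:
`I_M(A:B|C)_V ≥ ½ Tr[(V_AC/V_C)⁻¹ Δ (V_BC/V_C)⁻¹ Δᵀ] ≥ ½ Tr[A⁻¹ Δ B⁻¹ Δᵀ]`,
and the last quantity vanishes exactly when `X = Y C⁻¹ Zᵀ`. -/
theorem logdet_cmi_lower_bound (a b c : ℕ)
    (A : Matrix (Fin a) (Fin a) ℝ) (B : Matrix (Fin b) (Fin b) ℝ)
    (C : Matrix (Fin c) (Fin c) ℝ)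
    (X : Matrix (Fin a) (Fin b) ℝ) (Y : Matrix (Fin a) (Fin c) ℝ)
    (Z : Matrix (Fin b) (Fin c) ℝ)
    (hV : (fromBlocks (fromBlocks A X Xᵀ B) (fromRows Y Z) (fromCols Yᵀ Zᵀ)
            C).PosDef) :
    (1 / 2 : ℝ) * Real.log
        (((fromBlocks A Y Yᵀ C).det * (fromBlocks B Z Zᵀ C).det) /
          (C.det *
            (fromBlocks (fromBlocks A X Xᵀ B) (fromRows Y Z) (fromCols Yᵀ Zᵀ) C).det))
      ≥ (1 / 2 : ℝ) * Matrix.trace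
          ((A - Y * C⁻¹ * Yᵀ)⁻¹ * (X - Y * C⁻¹ * Zᵀ) *
            (B - Z * C⁻¹ * Zᵀ)⁻¹ * (X - Y * C⁻¹ * Zᵀ)ᵀ)
    ∧ (1 / 2 : ℝ) * Matrix.trace
          ((A - Y * C⁻¹ * Yᵀ)⁻¹ * (X - Y * C⁻¹ * Zᵀ) *
            (B - Z * C⁻¹ * Zᵀ)⁻¹ * (X - Y * C⁻¹ * Zᵀ)ᵀ)
        ≥ (1 / 2 : ℝ) * Matrix.trace
            (A⁻¹ * (X - Y * C⁻¹ * Zᵀ) * B⁻¹ * (X - Y * C⁻¹ * Zᵀ)ᵀ)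
    ∧ ((1 / 2 : ℝ) * Matrix.trace
            (A⁻¹ * (X - Y * C⁻¹ * Zᵀ) * B⁻¹ * (X - Y * C⁻¹ * Zᵀ)ᵀ) = 0
        ↔ X = Y * C⁻¹ * Zᵀ) := by
  classical
  have hQc : (fromRows Y Z)ᴴ = fromCols Yᵀ Zᵀ := by
    rw [conjTranspose_fromRows_eq_fromCols_conjTranspose,
      Matrix.conjTranspose_eq_transpose_of_trivial,
      Matrix.conjTranspose_eq_transpose_of_trivial]
  have hV' : (fromBlocks (fromBlocks A X Xᵀ B) (fromRows Y Z) ((fromRows Y Z)ᴴ) C).PosDef := by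
    rw [hQc]; exact hV
  have hC : C.PosDef := (aux_blocks_posdef hV').2
  have hP : (fromBlocks A X Xᵀ B).PosDef := (aux_blocks_posdef hV').1
  have hA : A.PosDef := (aux_blocks_posdef hP).1
  have hB : B.PosDef := (aux_blocks_posdef hP).2
  have hCT : Cᵀ = C := by
    have h : Cᴴ = C := hC.isHermitian
    rwa [Matrix.conjTranspose_eq_transpose_of_trivial] at h
  have hCinvT : C⁻¹ᵀ = C⁻¹ := by rw [Matrix.transpose_nonsing_inv, hCT]
  have hDH : (X - Y * C⁻¹ * Zᵀ)ᴴ = Xᵀ - Z * C⁻¹ * Yᵀ := by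
    rw [Matrix.conjTranspose_eq_transpose_of_trivial, Matrix.transpose_sub,
      Matrix.transpose_mul, Matrix.transpose_mul, Matrix.transpose_transpose, hCinvT]
    simp only [Matrix.mul_assoc]
  -- Schur complement with respect to C
  have hW0 : ((fromBlocks A X Xᵀ B) - (fromRows Y Z) * C⁻¹ * (fromRows Y Z)ᴴ).PosDef :=
    aux_schur22_posdef hV' hC
  have hblocks : (fromBlocks A X Xᵀ B) - (fromRows Y Z) * C⁻¹ * (fromRows Y Z)ᴴ =
      fromBlocks (A - Y * C⁻¹ * Yᵀ) (X - Y * C⁻¹ * Zᵀ)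
        ((X - Y * C⁻¹ * Zᵀ)ᴴ) (B - Z * C⁻¹ * Zᵀ) := by
    rw [hQc, Matrix.fromRows_mul, Matrix.fromRows_mul_fromCols, aux_fromBlocks_sub, hDH]
  have hW : (fromBlocks (A - Y * C⁻¹ * Yᵀ) (X - Y * C⁻¹ * Zᵀ)
      ((X - Y * C⁻¹ * Zᵀ)ᴴ) (B - Z * C⁻¹ * Zᵀ)).PosDef := by
    rw [← hblocks]; exact hW0
  have hAT : (A - Y * C⁻¹ * Yᵀ).PosDef := (aux_blocks_posdef hW).1
  have hBT : (B - Z * C⁻¹ * Zᵀ).PosDef := (aux_blocks_posdef hW).2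
  have hS0 : ((B - Z * C⁻¹ * Zᵀ) -
      (X - Y * C⁻¹ * Zᵀ)ᴴ * (A - Y * C⁻¹ * Yᵀ)⁻¹ * (X - Y * C⁻¹ * Zᵀ)).PosDef :=
    aux_schur11_posdef hW hAT
  -- determinants
  haveI instC : Invertible C := C.invertibleOfIsUnitDet hC.det_pos.ne'.isUnit
  haveI instAT : Invertible (A - Y * C⁻¹ * Yᵀ) :=
    (A - Y * C⁻¹ * Yᵀ).invertibleOfIsUnitDet hAT.det_pos.ne'.isUnit
  have det1 : (fromBlocks A Y Yᵀ C).det = C.det * (A - Y * C⁻¹ * Yᵀ).det := by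
    rw [Matrix.det_fromBlocks₂₂, Matrix.invOf_eq_nonsing_inv]
  have det2 : (fromBlocks B Z Zᵀ C).det = C.det * (B - Z * C⁻¹ * Zᵀ).det := by
    rw [Matrix.det_fromBlocks₂₂, Matrix.invOf_eq_nonsing_inv]
  have det3 : (fromBlocks (fromBlocks A X Xᵀ B) (fromRows Y Z) (fromCols Yᵀ Zᵀ) C).det =
      C.det * ((A - Y * C⁻¹ * Yᵀ).det *
        ((B - Z * C⁻¹ * Zᵀ) -
          (X - Y * C⁻¹ * Zᵀ)ᴴ * (A - Y * C⁻¹ * Yᵀ)⁻¹ * (X - Y * C⁻¹ * Zᵀ)).det) := by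
    rw [← hQc, Matrix.det_fromBlocks₂₂, Matrix.invOf_eq_nonsing_inv, hblocks,
      Matrix.det_fromBlocks₁₁, Matrix.invOf_eq_nonsing_inv]
  have hCd := hC.det_pos
  have hATd := hAT.det_pos
  have hBTd := hBT.det_pos
  have hSd := hS0.det_pos
  have hratio : ((fromBlocks A Y Yᵀ C).det * (fromBlocks B Z Zᵀ C).det) /
      (C.det * (fromBlocks (fromBlocks A X Xᵀ B) (fromRows Y Z) (fromCols Yᵀ Zᵀ) C).det) =
      (B - Z * C⁻¹ * Zᵀ).det /
        ((B - Z * C⁻¹ * Zᵀ) -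
          (X - Y * C⁻¹ * Zᵀ)ᴴ * (A - Y * C⁻¹ * Yᵀ)⁻¹ * (X - Y * C⁻¹ * Zᵀ)).det := by
    rw [det1, det2, det3, div_eq_div_iff
      (mul_pos hCd (mul_pos hCd (mul_pos hATd hSd))).ne' hSd.ne']
    ring
  rw [← Matrix.conjTranspose_eq_transpose_of_trivial (X - Y * C⁻¹ * Zᵀ)]
  refine ⟨?_, ?_, ?_⟩
  · rw [hratio, Real.log_div hBTd.ne' hSd.ne']
    have := aux_logdet_ineq hAT hBT hS0
    linarith
  · have psd1 : (A - (A - Y * C⁻¹ * Yᵀ)).PosSemidef := by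
      rw [sub_sub_cancel]
      have := hC.inv.posSemidef.mul_mul_conjTranspose_same Y
      rwa [Matrix.conjTranspose_eq_transpose_of_trivial] at this
    have psd2 : (B - (B - Z * C⁻¹ * Zᵀ)).PosSemidef := by
      rw [sub_sub_cancel]
      have := hC.inv.posSemidef.mul_mul_conjTranspose_same Z
      rwa [Matrix.conjTranspose_eq_transpose_of_trivial] at this
    have := aux_mono_ineq hA hAT hB hBT psd1 psd2 (D := X - Y * C⁻¹ * Zᵀ)
    linarith
  · have hfaith := aux_faithful hA hB (X - Y * C⁻¹ * Zᵀ)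
    constructor
    · intro h
      have ht : (A⁻¹ * (X - Y * C⁻¹ * Zᵀ) * B⁻¹ * (X - Y * C⁻¹ * Zᵀ)ᴴ).trace = 0 := by
        linarith
      have := hfaith.mp ht
      rwa [sub_eq_zero] at this
    · intro h
      have : X - Y * C⁻¹ * Zᵀ = 0 := by rw [h]; simp
      rw [hfaith.mpr this]
      ring
end
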